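/- arXiv:2211.00920 — 8 statements merged into one kernel-verified Lean document; each statement's English description precedes it below -/
import Mathlib

section
/- The sum over k from 1 to N-1 of binomial(N-2, k-1) * k^(k-2) * (N-k)^(N-k-2) equals 2*N^(N-3), for any integer N ≥ 3. -/
open Finset fwdDiff

lemma fwdDiff_pow_eq_zero (c : ℤ) : ∀ d m : ℕ, d < m →
    (fwdDiff (1:ℕ))^[m] (fun x : ℕ ↦ ((x : ℤ) + c) ^ d) = 0 := by
  intro d
  induction d using Nat.strong_induction_on with
  | _ d IH =>
    intro m hdm
    obtain ⟨m', rfl⟩ : ∃ m', m = m' + 1 := ⟨m - 1, by omega⟩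
    rw [Function.iterate_succ_apply]
    have hΔ : fwdDiff (1:ℕ) (fun x : ℕ ↦ ((x : ℤ) + c) ^ d)
        = ∑ i ∈ Finset.range d, (d.choose i : ℤ) • fun x : ℕ ↦ ((x : ℤ) + c) ^ i := by
      funext x
      simp only [fwdDiff, Finset.sum_apply, Pi.smul_apply, smul_eq_mul]
      have h1 : ((x + 1 : ℕ) : ℤ) + c = ((x : ℤ) + c) + 1 := by push_cast; ring
      rw [h1, add_pow, Finset.sum_range_succ]
      simp [mul_comm]
    rw [hΔ, fwdDiff_iter_finset_sum]
    refine Finset.sum_eq_zero fun i hi ↦ ?_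
    have hid := Finset.mem_range.mp hi
    rw [fwdDiff_iter_const_smul, IH i hid m' (by omega)]
    simp

lemma alt_sum_choose_pow (m d : ℕ) (hdm : d < m) :
    ∑ k ∈ Finset.range (m + 1), (-1 : ℤ) ^ (m - k) * (m.choose k) * ((k : ℤ) + 1) ^ d = 0 := by
  have h := fwdDiff_iter_eq_sum_shift (1 : ℕ) (fun x : ℕ ↦ ((x : ℤ) + 1) ^ d) m 0
  rw [fwdDiff_pow_eq_zero 1 d m hdm] at h
  simp only [Pi.zero_apply, zero_add, smul_eq_mul, Nat.smul_one_eq_cast] at h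
  rw [eq_comm] at h
  convert h using 2 with k
  push_cast
  ring

lemma abel_Q (n : ℕ) :
    ∑ k ∈ Finset.range (n + 1),
      (n.choose k : ℤ) * ((k : ℤ) + 1) ^ (k - 1) * (((n - k : ℕ) : ℤ) + 1) ^ (n - k)
    = ((n : ℤ) + 2) ^ n := by
  have key : ∀ k ∈ Finset.range (n + 1),
      (n.choose k : ℤ) * ((k : ℤ) + 1) ^ (k - 1) * (((n - k : ℕ) : ℤ) + 1) ^ (n - k)
      = ∑ m ∈ Finset.Ico k (n + 1),
          (n.choose k : ℤ) * ((n - k : ℕ).choose (m - k)) * ((k : ℤ) + 1) ^ (k - 1)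
            * (-((k : ℤ) + 1)) ^ (m - k) * ((n : ℤ) + 2) ^ (n - m) := by
    intro k hk
    rw [Finset.mem_range, Nat.lt_succ_iff] at hk
    have hbase : (((n - k : ℕ) : ℤ) + 1) = (-((k : ℤ) + 1)) + ((n : ℤ) + 2) := by
      rw [Nat.cast_sub hk]; ring
    rw [hbase, add_pow (-((k : ℤ) + 1)) ((n : ℤ) + 2) (n - k), Finset.mul_sum]
    rw [show Finset.Ico k (n + 1) = Finset.Ico k (k + (n - k + 1)) by congr 1; omega,
      Finset.sum_Ico_eq_sum_range, Nat.add_sub_cancel_left]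
    refine Finset.sum_congr rfl fun j hj ↦ ?_
    rw [Finset.mem_range] at hj
    have h1 : k + j - k = j := by omega
    have h2 : n - (k + j) = n - k - j := by omega
    rw [h1, h2]
    ring
  rw [Finset.sum_congr rfl key]
  have hmem : ∀ (k m : ℕ), k ∈ Finset.range (n + 1) ∧ m ∈ Finset.Ico k (n + 1) ↔
      k ∈ Finset.range (m + 1) ∧ m ∈ Finset.range (n + 1) := by
    intro k m
    simp only [Finset.mem_range, Finset.mem_Ico]
    omega
  rw [Finset.sum_comm' hmem]
  have inner : ∀ m ∈ Finset.range (n + 1),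
      (∑ k ∈ Finset.range (m + 1),
        (n.choose k : ℤ) * ((n - k : ℕ).choose (m - k)) * ((k : ℤ) + 1) ^ (k - 1)
          * (-((k : ℤ) + 1)) ^ (m - k) * ((n : ℤ) + 2) ^ (n - m))
      = if m = 0 then ((n : ℤ) + 2) ^ n else 0 := by
    intro m hm
    rw [Finset.mem_range, Nat.lt_succ_iff] at hm
    rcases Nat.eq_zero_or_pos m with rfl | hm0
    · simp
    · rw [if_neg hm0.ne']
      have step : ∀ k ∈ Finset.range (m + 1),
          (n.choose k : ℤ) * ((n - k : ℕ).choose (m - k)) * ((k : ℤ) + 1) ^ (k - 1)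
            * (-((k : ℤ) + 1)) ^ (m - k) * ((n : ℤ) + 2) ^ (n - m)
          = ((n.choose m : ℤ) * ((n : ℤ) + 2) ^ (n - m))
            * ((-1 : ℤ) ^ (m - k) * (m.choose k) * ((k : ℤ) + 1) ^ (m - 1)) := by
        intro k hk
        rw [Finset.mem_range, Nat.lt_succ_iff] at hk
        have hcc : (n.choose k : ℤ) * ((n - k : ℕ).choose (m - k) : ℤ)
            = (n.choose m : ℤ) * (m.choose k : ℤ) := by
          exact_mod_cast congrArg (Nat.cast : ℕ → ℤ) (Nat.choose_mul (n := n) hk).symm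
        have hpow : ((k : ℤ) + 1) ^ (k - 1) * ((k : ℤ) + 1) ^ (m - k)
            = ((k : ℤ) + 1) ^ (m - 1) := by
          rcases Nat.eq_zero_or_pos k with rfl | hk0
          · simp
          · rw [← pow_add]; congr 1; omega
        calc (n.choose k : ℤ) * ((n - k : ℕ).choose (m - k)) * ((k : ℤ) + 1) ^ (k - 1)
              * (-((k : ℤ) + 1)) ^ (m - k) * ((n : ℤ) + 2) ^ (n - m)
            = ((n.choose k : ℤ) * ((n - k : ℕ).choose (m - k)))
              * ((((k : ℤ) + 1) ^ (k - 1) * ((k : ℤ) + 1) ^ (m - k)) * ((-1 : ℤ) ^ (m - k))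
              * ((n : ℤ) + 2) ^ (n - m)) := by rw [neg_pow]; ring
          _ = _ := by rw [hcc, hpow]; ring
      rw [Finset.sum_congr rfl step, ← Finset.mul_sum,
        alt_sum_choose_pow m (m - 1) (by omega), mul_zero]
  rw [Finset.sum_congr rfl inner]
  simp

lemma abel_Q' (n : ℕ) :
    ∑ k ∈ Finset.range (n + 1),
      (n.choose k : ℤ) * ((k : ℤ) + 1) ^ k * (((n - k : ℕ) : ℤ) + 1) ^ (n - k - 1)
    = ((n : ℤ) + 2) ^ n := by
  rw [← abel_Q n, ← Finset.sum_range_reflect]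
  refine Finset.sum_congr rfl fun k hk ↦ ?_
  rw [Finset.mem_range, Nat.lt_succ_iff] at hk
  have h1 : n + 1 - 1 - k = n - k := by omega
  have h2 : n - (n - k) = k := by omega
  rw [h1, h2, Nat.choose_symm hk]; ring

lemma abel_P (n : ℕ) (hn : 1 ≤ n) :
    ∑ k ∈ Finset.range (n + 1),
      (n.choose k : ℤ) * ((k : ℤ) + 1) ^ (k - 1) * (((n - k : ℕ) : ℤ) + 1) ^ (n - k - 1)
    = 2 * ((n : ℤ) + 2) ^ (n - 1) := by
  have h2 : ((n : ℤ) + 2) ≠ 0 := by positivity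
  apply mul_left_cancel₀ h2
  rw [Finset.mul_sum]
  have expand : ∀ k ∈ Finset.range (n + 1),
      ((n : ℤ) + 2) * ((n.choose k : ℤ) * ((k : ℤ) + 1) ^ (k - 1)
          * (((n - k : ℕ) : ℤ) + 1) ^ (n - k - 1))
      = (n.choose k : ℤ) * ((k : ℤ) + 1) ^ k * (((n - k : ℕ) : ℤ) + 1) ^ (n - k - 1)
        + (n.choose k : ℤ) * ((k : ℤ) + 1) ^ (k - 1) * (((n - k : ℕ) : ℤ) + 1) ^ (n - k) := by
    intro k hk
    rw [Finset.mem_range, Nat.lt_succ_iff] at hk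
    have hsplit : ((n : ℤ) + 2) = (((k : ℤ)) + 1) + ((((n - k : ℕ) : ℤ)) + 1) := by
      rw [Nat.cast_sub hk]; ring
    have hp1 : ((k : ℤ) + 1) * ((k : ℤ) + 1) ^ (k - 1) = ((k : ℤ) + 1) ^ k := by
      rcases Nat.eq_zero_or_pos k with rfl | hk0
      · simp
      · rw [← pow_succ']; congr 1; omega
    have hp2 : (((n - k : ℕ) : ℤ) + 1) * (((n - k : ℕ) : ℤ) + 1) ^ (n - k - 1)
        = (((n - k : ℕ) : ℤ) + 1) ^ (n - k) := by
      rcases Nat.eq_zero_or_pos (n - k) with h0 | hk0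
      · rw [h0]; simp
      · rw [← pow_succ']; congr 1; omega
    calc ((n : ℤ) + 2) * ((n.choose k : ℤ) * ((k : ℤ) + 1) ^ (k - 1)
            * (((n - k : ℕ) : ℤ) + 1) ^ (n - k - 1))
        = (n.choose k : ℤ) * ((((k : ℤ)) + 1) * ((k : ℤ) + 1) ^ (k - 1))
            * (((n - k : ℕ) : ℤ) + 1) ^ (n - k - 1)
          + (n.choose k : ℤ) * ((k : ℤ) + 1) ^ (k - 1)
            * (((((n - k : ℕ) : ℤ)) + 1) * (((n - k : ℕ) : ℤ) + 1) ^ (n - k - 1)) := by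
          rw [hsplit]; ring
      _ = _ := by rw [hp1, hp2]
  rw [Finset.sum_congr rfl expand, Finset.sum_add_distrib, abel_Q n, abel_Q' n]
  have : ((n : ℤ) + 2) ^ n = ((n : ℤ) + 2) * ((n : ℤ) + 2) ^ (n - 1) := by
    rw [← pow_succ']; congr 1; omega
  rw [this]; ring

theorem sum_forest_identity (N : ℕ) (hN : 3 ≤ N) :
    ∑ k ∈ Finset.Icc 1 (N - 1),
      (Nat.choose (N - 2) (k - 1)) * k ^ (k - 2) * (N - k) ^ (N - k - 2)
      = 2 * N ^ (N - 3) := by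
  have key := abel_P (N - 2) (by omega)
  apply Nat.cast_injective (R := ℤ)
  push_cast
  rw [show Finset.Icc 1 (N - 1) = Finset.Ico 1 N by rw [← Finset.Ico_add_one_right_eq_Icc]; congr 1; omega,
    Finset.sum_Ico_eq_sum_range]
  rw [show N - 1 = (N - 2) + 1 by omega]
  rw [show ((N : ℤ)) = ((N - 2 : ℕ) : ℤ) + 2 by push_cast [Nat.cast_sub (by omega : 2 ≤ N)]; ring,
    show N - 3 = (N - 2) - 1 by omega, ← key]
  refine Finset.sum_congr rfl fun j hj ↦ ?_
  rw [Finset.mem_range, Nat.lt_succ_iff] at hj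
  have e1 : 1 + j - 2 = j - 1 := by omega
  have e2 : (N - (1 + j) : ℕ) = (N - 2 - j) + 1 := by omega
  have e3 : N - (1 + j) - 2 = (N - 2) - j - 1 := by omega
  have e4 : 1 + j - 1 = j := by omega
  rw [e1, e3, e2, e4]
  push_cast
  ring
end

section
/- Let χ₁ be the number of spanning trees of the complete graph K_N and χ₂ the number of spanning forests of K_N with exactly two components, one containing a fixed vertex u and the other containing a fixed vertex v (u ≠ v). Then χ₂ = 2*N^(N-3) for N ≥ 3. -/
set_option linter.unusedSectionVars false

open Finset Function

namespace TwoForest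

variable {V : Type*} [DecidableEq V]

/-- Every iterate-orbit eventually escapes `S`. -/
def Gr (S : Finset V) (f : V → V) : Prop := ∀ x : V, ∃ m, f^[m] x ∉ S

def Good (S : Finset V) (f : V → V) : Prop := (∀ x ∉ S, f x = x) ∧ Gr S f

noncomputable def ht {S : Finset V} {f : V → V} (hf : Gr S f) (x : V) : ℕ :=
  Nat.find (hf x)

lemma ht_spec {S : Finset V} {f : V → V} (hf : Gr S f) (x : V) : f^[ht hf x] x ∉ S :=
  Nat.find_spec (hf x)

lemma ht_min {S : Finset V} {f : V → V} (hf : Gr S f) {x : V} {k : ℕ} (h : k < ht hf x) :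
    f^[k] x ∈ S := by
  have := Nat.find_min (hf x) h
  simpa using this

lemma ht_le {S : Finset V} {f : V → V} (hf : Gr S f) {x : V} {k : ℕ} (h : f^[k] x ∉ S) :
    ht hf x ≤ k := Nat.find_le h

lemma ne_of_mem_gr {S : Finset V} {f : V → V} (hf : Gr S f) {x : V} (hx : x ∈ S) : f x ≠ x := by
  intro h
  obtain ⟨m, hm⟩ := hf x
  rw [Function.iterate_fixed h] at hm
  exact hm hx

lemma ht_pos {S : Finset V} {f : V → V} (hf : Gr S f) {x : V} (hx : x ∈ S) : 1 ≤ ht hf x := by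
  by_contra h
  push_neg at h
  interval_cases h' : ht hf x
  · have := ht_spec hf x
    rw [h'] at this
    exact this hx

lemma ht_apply_lt {S : Finset V} {f : V → V} (hf : Gr S f) {x : V} (hx : x ∈ S) :
    ht hf (f x) < ht hf x := by
  have h1 := ht_pos hf hx
  have h2 : f^[ht hf x - 1] (f x) ∉ S := by
    have h3 := ht_spec hf x
    rw [show ht hf x = (ht hf x - 1) + 1 from by omega,
      Function.iterate_succ_apply] at h3
    exact h3
  have := ht_le hf h2
  omega

/-- transfer groundedness along pointwise agreement on `T` -/
lemma gr_of_agree {T : Finset V} {f g : V → V} (hagree : ∀ x ∈ T, g x = f x)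
    (hf : ∀ x, ∃ m, f^[m] x ∉ T) : ∀ x, ∃ m, g^[m] x ∉ T := by
  intro x
  refine ⟨Nat.find (hf x), ?_⟩
  have key : ∀ k, k ≤ Nat.find (hf x) → g^[k] x = f^[k] x := by
    intro k
    induction k with
    | zero => intro _; rfl
    | succ k ih =>
      intro hk
      have hkT : f^[k] x ∈ T := by
        have := Nat.find_min (hf x) (show k < Nat.find (hf x) by omega)
        simpa using this
      rw [Function.iterate_succ_apply', Function.iterate_succ_apply',
        ih (by omega), hagree _ hkT]
  rw [key _ le_rfl]
  exact Nat.find_spec (hf x)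

variable [LinearOrder V]

/-- the leaves: elements of `S` that are not the image of anything in `S`. -/
def leaves (S : Finset V) (f : V → V) : Finset V := S \ S.image f

lemma max'_leaves_mem {S : Finset V} {f : V → V} (h : (leaves S f).Nonempty) :
    (leaves S f).max' h ∈ S :=
  (Finset.mem_sdiff.mp ((leaves S f).max'_mem h)).1

lemma max'_leaves_not_image {S : Finset V} {f : V → V} (h : (leaves S f).Nonempty) :
    (leaves S f).max' h ∉ S.image f :=
  (Finset.mem_sdiff.mp ((leaves S f).max'_mem h)).2

lemma exists_leaf {S : Finset V} {f : V → V} (hS : S.Nonempty) (hf : Gr S f) :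
    (leaves S f).Nonempty := by
  by_contra h
  have hsub : S ⊆ S.image f := by
    intro x hx
    by_contra hx2
    exact h ⟨x, Finset.mem_sdiff.mpr ⟨hx, hx2⟩⟩
  obtain ⟨x, hx, hmax⟩ := S.exists_max_image (fun y => ht hf y) hS
  obtain ⟨s, hs, hfs⟩ := Finset.mem_image.mp (hsub hx)
  have h1 : ht hf x < ht hf s := hfs ▸ ht_apply_lt hf hs
  exact absurd (hmax s hs) (by simpa using h1.not_ge)

lemma good_step {S : Finset V} {f : V → V} (hf : Good S f) {ℓ : V} (hℓ : ℓ ∈ S) :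
    Good (S.erase ℓ) (Function.update f ℓ ℓ) := by
  constructor
  · intro x hx
    rcases eq_or_ne x ℓ with rfl | hne
    · simp
    · rw [Function.update_of_ne hne]
      exact hf.1 x (fun hxS => hx (Finset.mem_erase.mpr ⟨hne, hxS⟩))
  · apply gr_of_agree (f := f)
    · intro x hx
      exact Function.update_of_ne (Finset.mem_erase.mp hx).1 _ _
    · intro x
      obtain ⟨m, hm⟩ := hf.2 x
      exact ⟨m, fun hc => hm (Finset.mem_of_mem_erase hc)⟩

noncomputable def encode (S : Finset V) (f : V → V) : List V :=
  if h : (leaves S f).Nonempty then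
    f ((leaves S f).max' h) ::
      encode (S.erase ((leaves S f).max' h))
        (Function.update f ((leaves S f).max' h) ((leaves S f).max' h))
  else []
termination_by S.card
decreasing_by exact Finset.card_erase_lt_of_mem (Finset.mem_sdiff.mp (Finset.max'_mem _ h)).1

lemma encode_of_nonempty {S : Finset V} {f : V → V} (h : (leaves S f).Nonempty) :
    encode S f = f ((leaves S f).max' h) ::
      encode (S.erase ((leaves S f).max' h))
        (Function.update f ((leaves S f).max' h) ((leaves S f).max' h)) := by
  rw [encode, dif_pos h]

lemma encode_of_empty {S : Finset V} {f : V → V} (h : ¬ (leaves S f).Nonempty) :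
    encode S f = [] := by
  rw [encode, dif_neg h]

lemma encode_length : ∀ (S : Finset V) (f : V → V), Good S f → (encode S f).length = S.card := by
  intro S
  induction S using Finset.strongInduction with
  | _ S ih =>
    intro f hf
    rcases S.eq_empty_or_nonempty with rfl | hS
    · rw [encode_of_empty (by simp [leaves])]
      simp
    · have h := exists_leaf hS hf.2
      set ℓ := (leaves S f).max' h with hℓdef
      have hℓS : ℓ ∈ S := max'_leaves_mem h
      rw [encode_of_nonempty h]
      rw [List.length_cons, ih _ (Finset.erase_ssubset hℓS) _ (good_step hf hℓS),
        Finset.card_erase_of_mem hℓS]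
      have := Finset.card_pos.mpr hS
      omega

lemma encode_toFinset : ∀ (S : Finset V) (f : V → V), Good S f →
    (encode S f).toFinset = S.image f := by
  intro S
  induction S using Finset.strongInduction with
  | _ S ih =>
    intro f hf
    rcases S.eq_empty_or_nonempty with rfl | hS
    · rw [encode_of_empty (by simp [leaves])]
      simp
    · have h := exists_leaf hS hf.2
      set ℓ := (leaves S f).max' h with hℓdef
      have hℓS : ℓ ∈ S := max'_leaves_mem h
      rw [encode_of_nonempty h]
      rw [List.toFinset_cons, ih _ (Finset.erase_ssubset hℓS) _ (good_step hf hℓS)]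
      have him : (S.erase ℓ).image (Function.update f ℓ ℓ) = (S.erase ℓ).image f :=
        Finset.image_congr (fun x hx => Function.update_of_ne (Finset.mem_erase.mp hx).1 _ _)
      rw [him, ← Finset.image_insert, Finset.insert_erase hℓS]

lemma encode_getLast? : ∀ (S : Finset V) (f : V → V), Good S f →
    ∀ x ∈ (encode S f).getLast?, x ∉ S := by
  intro S
  induction S using Finset.strongInduction with
  | _ S ih =>
    intro f hf x hx
    rcases S.eq_empty_or_nonempty with rfl | hS
    · rw [encode_of_empty (by simp [leaves])] at hx
      simp at hx
    · have h := exists_leaf hS hf.2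
      set ℓ := (leaves S f).max' h with hℓdef
      have hℓS : ℓ ∈ S := max'_leaves_mem h
      have hstep := good_step hf hℓS
      rw [encode_of_nonempty h, ← hℓdef] at hx
      rcases hrest : encode (S.erase ℓ) (Function.update f ℓ ℓ) with _ | ⟨b, rest'⟩
      · -- S is a singleton {ℓ}, last element is f ℓ ≠ ℓ
        rw [hrest] at hx
        simp only [List.getLast?_singleton, Option.mem_def, Option.some.injEq] at hx
        subst hx
        have hcard : (S.erase ℓ).card = 0 := by
          rw [← encode_length _ _ hstep, hrest, List.length_nil]
        have hpos := Finset.card_pos.mpr hS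
        have hec := Finset.card_erase_of_mem hℓS
        have hSsing : S = {ℓ} := by
          apply Finset.eq_singleton_iff_unique_mem.mpr
          refine ⟨hℓS, fun y hy => ?_⟩
          by_contra hne
          exact absurd (Finset.card_pos.mpr ⟨y, Finset.mem_erase.mpr ⟨hne, hy⟩⟩) (by omega)
        rw [hSsing, Finset.mem_singleton]
        exact ne_of_mem_gr hf.2 hℓS
      · rw [hrest, List.getLast?_cons_cons] at hx
        have h2 := ih _ (Finset.erase_ssubset hℓS) _ hstep x (by rw [hrest]; exact hx)
        intro hxS
        apply h2
        refine Finset.mem_erase.mpr ⟨?_, hxS⟩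
        -- x ∈ entries of rest = image over erase ⊆ image over S; ℓ not in image
        have hxmem : x ∈ (b :: rest').toFinset := by
          rw [List.mem_toFinset]
          exact List.mem_of_mem_getLast? hx
        rw [← hrest, encode_toFinset _ _ hstep] at hxmem
        intro hxl
        subst hxl
        apply max'_leaves_not_image h
        rw [← hℓdef]
        obtain ⟨y, hy, hyx⟩ := Finset.mem_image.mp hxmem
        have : Function.update f ℓ ℓ y = f y :=
          Function.update_of_ne (Finset.mem_erase.mp hy).1 _ _
        exact Finset.mem_image.mpr ⟨y, Finset.mem_of_mem_erase hy, by rw [← this, hyx]⟩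

lemma max'_eq_of_eq {s t : Finset V} (h : s = t) (hs : s.Nonempty) :
    s.max' hs = t.max' (h ▸ hs) := by subst h; rfl

noncomputable def decode : List V → Finset V → (V → V)
  | [], _ => id
  | a :: rest, S =>
    if h : (S \ (a :: rest).toFinset).Nonempty then
      Function.update (decode rest (S.erase ((S \ (a :: rest).toFinset).max' h)))
        ((S \ (a :: rest).toFinset).max' h) a
    else id

lemma decode_encode : ∀ (S : Finset V) (f : V → V), Good S f → decode (encode S f) S = f := by
  intro S
  induction S using Finset.strongInduction with
  | _ S ih =>
    intro f hf
    rcases S.eq_empty_or_nonempty with rfl | hS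
    · rw [encode_of_empty (by simp [leaves])]
      funext x
      exact (hf.1 x (by simp)).symm
    · have h := exists_leaf hS hf.2
      set ℓ := (leaves S f).max' h with hℓdef
      have hℓS : ℓ ∈ S := max'_leaves_mem h
      have hstep := good_step hf hℓS
      have hE : encode S f = f ℓ :: encode (S.erase ℓ) (Function.update f ℓ ℓ) := by
        rw [encode_of_nonempty h]
      rw [hE, decode]
      have hcond : S \ (f ℓ :: encode (S.erase ℓ) (Function.update f ℓ ℓ)).toFinset
          = leaves S f := by
        rw [← hE, encode_toFinset _ _ hf]
        rfl
      simp only [hcond]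
      rw [dif_pos h, ← hℓdef, ih _ (Finset.erase_ssubset hℓS) _ hstep]
      funext x
      rcases eq_or_ne x ℓ with rfl | hne
      · simp
      · simp [Function.update_of_ne hne]

lemma sdiff_entries_nonempty {S : Finset V} {a : V} {rest : List V}
    (hlen : (a :: rest).length = S.card)
    (hlast : ∀ x ∈ (a :: rest).getLast?, x ∉ S) :
    (S \ (a :: rest).toFinset).Nonempty := by
  rw [Finset.sdiff_nonempty]
  intro hsub
  set l := a :: rest with hl
  have hne : l ≠ [] := by simp [hl]
  have hdl : l.dropLast ++ [l.getLast hne] = l := List.dropLast_append_getLast hne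
  have hsub2 : S ⊆ l.dropLast.toFinset := by
    intro x hx
    have hxl := hsub hx
    rw [List.mem_toFinset, ← hdl, List.mem_append] at hxl
    rcases hxl with h1 | h1
    · rwa [List.mem_toFinset]
    · simp only [List.mem_singleton] at h1
      subst h1
      exact absurd hx (hlast _ (List.getLast?_eq_getLast hne ▸ rfl))
  have := (Finset.card_le_card hsub2).trans (List.toFinset_card_le _)
  rw [List.length_dropLast, ← hlen] at this
  simp [hl] at this

lemma good_extend {S : Finset V} {g : V → V} {ℓ a : V} (hℓ : ℓ ∈ S)
    (hg : Good (S.erase ℓ) g) (ha : a ≠ ℓ)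
    (hima : ∀ x ∈ S.erase ℓ, g x ≠ ℓ) :
    Good S (Function.update g ℓ a) := by
  set f := Function.update g ℓ a with hfdef
  have hgr := hg.2
  -- main claim : orbits of points ≠ ℓ escape S
  have claimA : ∀ x, x ≠ ℓ → ∀ k, k ≤ ht hgr x → f^[k] x = g^[k] x ∧ g^[k] x ≠ ℓ := by
    intro x hx k
    induction k with
    | zero => exact fun _ => ⟨rfl, hx⟩
    | succ k ihk =>
      intro hk
      obtain ⟨ih1, ih2⟩ := ihk (by omega)
      have hkS : g^[k] x ∈ S.erase ℓ := ht_min hgr (by omega)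
      constructor
      · rw [Function.iterate_succ_apply', Function.iterate_succ_apply', ih1, hfdef,
          Function.update_of_ne ih2]
      · rw [Function.iterate_succ_apply']
        exact hima _ hkS
  have claimB : ∀ x, x ≠ ℓ → ∃ m, f^[m] x ∉ S := by
    intro x hx
    refine ⟨ht hgr x, ?_⟩
    obtain ⟨h1, h2⟩ := claimA x hx _ le_rfl
    rw [h1]
    have h3 := ht_spec hgr x
    intro hS2
    exact h3 (Finset.mem_erase.mpr ⟨h2, hS2⟩)
  constructor
  · intro x hx
    have hxl : x ≠ ℓ := fun hc => hx (hc ▸ hℓ)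
    rw [hfdef, Function.update_of_ne hxl]
    exact hg.1 x (fun hc => hx (Finset.mem_of_mem_erase hc))
  · intro x
    rcases eq_or_ne x ℓ with rfl | hx
    · obtain ⟨m, hm⟩ := claimB a ha
      refine ⟨m + 1, ?_⟩
      rwa [Function.iterate_succ_apply, hfdef, Function.update_self]
    · exact claimB x hx

lemma encode_decode : ∀ (l : List V) (S : Finset V), l.length = S.card →
    (∀ x ∈ l.getLast?, x ∉ S) →
    Good S (decode l S) ∧ encode S (decode l S) = l := by
  intro l
  induction l with
  | nil =>
    intro S hlen _
    have hS : S = ∅ := Finset.card_eq_zero.mp hlen.symm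
    subst hS
    refine ⟨⟨fun x _ => rfl, fun x => ⟨0, by simp⟩⟩, ?_⟩
    rw [encode_of_empty (by simp [leaves])]
  | cons a rest ihl =>
    intro S hlen hlast
    have hT := sdiff_entries_nonempty hlen hlast
    set ℓ := (S \ (a :: rest).toFinset).max' hT with hℓdef
    have hℓmem := Finset.mem_sdiff.mp ((S \ (a :: rest).toFinset).max'_mem hT)
    rw [← hℓdef] at hℓmem
    obtain ⟨hℓS, hℓent⟩ := hℓmem
    rw [decode, dif_pos hT, ← hℓdef]
    -- IH for rest on S.erase ℓ
    have hlen' : rest.length = (S.erase ℓ).card := by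
      rw [Finset.card_erase_of_mem hℓS, ← hlen]
      rfl
    have hlast' : ∀ x ∈ rest.getLast?, x ∉ S.erase ℓ := by
      intro x hx
      have : x ∈ (a :: rest).getLast? := by
        rcases rest with _ | ⟨b, rest'⟩
        · simp at hx
        · rwa [List.getLast?_cons_cons]
      exact fun hc => hlast x this (Finset.mem_of_mem_erase hc)
    obtain ⟨hgood, henc⟩ := ihl (S.erase ℓ) hlen' hlast'
    set g := decode rest (S.erase ℓ) with hgdef
    have hgfin : rest.toFinset = (S.erase ℓ).image g := by
      rw [← henc, encode_toFinset _ _ hgood]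
    have hal : a ≠ ℓ := by
      intro hc
      exact hℓent (by simp [← hc])
    have hima : ∀ x ∈ S.erase ℓ, g x ≠ ℓ := by
      intro x hx hc
      apply hℓent
      have : ℓ ∈ rest.toFinset := by
        rw [hgfin]
        exact Finset.mem_image.mpr ⟨x, hx, hc⟩
      simp only [List.toFinset_cons, Finset.mem_insert]
      exact Or.inr (by rwa [List.mem_toFinset] at this ⊢)
    have hGood : Good S (Function.update g ℓ a) := good_extend hℓS hgood hal hima
    refine ⟨hGood, ?_⟩
    -- image of extended function over S is entries of a :: rest
    have himage : S.image (Function.update g ℓ a) = (a :: rest).toFinset := by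
      rw [← Finset.insert_erase hℓS, Finset.image_insert, Function.update_self,
        Finset.image_congr (g := g)
          (fun x hx => Function.update_of_ne (Finset.mem_erase.mp hx).1 _ _)]
      · rw [← hgfin, List.toFinset_cons]
    have hleaves : leaves S (Function.update g ℓ a) = S \ (a :: rest).toFinset := by
      rw [leaves, himage]
    have hne : (leaves S (Function.update g ℓ a)).Nonempty := by
      rw [hleaves]; exact hT
    rw [encode_of_nonempty hne]
    have hmax : (leaves S (Function.update g ℓ a)).max' hne = ℓ :=
      max'_eq_of_eq hleaves hne
    rw [hmax, Function.update_self]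
    congr 1
    have : Function.update (Function.update g ℓ a) ℓ ℓ = g := by
      rw [Function.update_idem]
      have : g ℓ = ℓ := hgood.1 ℓ (by simp)
      nth_rewrite 2 [← this]
      exact Function.update_eq_self _ _
    rw [this, henc]

noncomputable def goodEquivList (S : Finset V) :
    {f : V → V // Good S f} ≃
      {l : List V // l.length = S.card ∧ ∀ x ∈ l.getLast?, x ∉ S} where
  toFun f := ⟨encode S f.1, encode_length S f.1 f.2, encode_getLast? S f.1 f.2⟩
  invFun l := ⟨decode l.1 S, (encode_decode l.1 S l.2.1 l.2.2).1⟩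
  left_inv f := Subtype.ext (decode_encode S f.1 f.2)
  right_inv l := Subtype.ext (encode_decode l.1 S l.2.1 l.2.2).2

lemma concat_ofFn_getD {α : Type*} {l : List α} {n : ℕ} (hn : l.length = n + 1) (x₀ : α)
    (hne : l ≠ []) :
    (List.ofFn (fun i : Fin n => l.getD i x₀)) ++ [l.getLast hne] = l := by
  apply List.ext_getElem
  · simp [hn]
  · intro j h1 h2
    rcases lt_or_ge j n with hj | hj
    · rw [List.getElem_append_left (by simpa using hj)]
      rw [List.getElem_ofFn]
      rw [List.getD_eq_getElem _ _ (by omega)]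
    · have hj2 : j = n := by
        simp only [List.length_append, List.length_ofFn, List.length_singleton] at h1
        omega
      subst hj2
      rw [List.getElem_append_right (by simp)]
      simp only [List.length_ofFn, Nat.sub_self, List.getElem_singleton]
      rw [List.getLast_eq_getElem]
      congr 1
      omega

noncomputable def listEquivProd (S : Finset V) (hS : S.Nonempty) :
    {l : List V // l.length = S.card ∧ ∀ x ∈ l.getLast?, x ∉ S} ≃
      (Fin (S.card - 1) → V) × {x : V // x ∉ S} where
  toFun l := by
    have hne : l.1 ≠ [] := by
      intro hc
      have h1 := l.2.1
      rw [hc, List.length_nil] at h1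
      have h2 := Finset.card_pos.mpr hS
      omega
    exact (fun i => l.1.getD i hS.choose,
      ⟨l.1.getLast hne, l.2.2 _ (List.getLast?_eq_getLast hne ▸ rfl)⟩)
  invFun p := ⟨List.ofFn p.1 ++ [p.2.1], by
    constructor
    · have h2 := Finset.card_pos.mpr hS
      simp only [List.length_append, List.length_ofFn, List.length_singleton]
      omega
    · intro x hx
      rw [List.getLast?_concat] at hx
      simp only [Option.mem_def, Option.some.injEq] at hx
      subst hx
      exact p.2.2⟩
  left_inv l := by
    apply Subtype.ext
    have hne : l.1 ≠ [] := by
      intro hc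
      have h1 := l.2.1
      rw [hc, List.length_nil] at h1
      have h2 := Finset.card_pos.mpr hS
      omega
    have hn : l.1.length = (S.card - 1) + 1 := by
      have h1 := l.2.1
      have h2 := Finset.card_pos.mpr hS
      omega
    exact concat_ofFn_getD hn hS.choose hne
  right_inv p := by
    have h2 := Finset.card_pos.mpr hS
    ext i
    · simp only
      rw [List.getD_eq_getElem _ _ (by
          simp only [List.length_append, List.length_ofFn, List.length_singleton]
          omega)]
      rw [List.getElem_append_left (by simpa using i.2)]
      simp
    · simp only
      exact List.getLast_append_of_ne_nil _ (by simp)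

theorem card_good [Fintype V] (S : Finset V) (hS : S.Nonempty) :
    Nat.card {f : V → V // Good S f}
      = (Fintype.card V - S.card) * (Fintype.card V) ^ (S.card - 1) := by
  rw [Nat.card_congr ((goodEquivList S).trans (listEquivProd S hS))]
  rw [Nat.card_prod]
  have h1 : Nat.card (Fin (S.card - 1) → V) = (Fintype.card V) ^ (S.card - 1) := by
    rw [Nat.card_eq_fintype_card, Fintype.card_fun, Fintype.card_fin]
  have h2 : Nat.card {x : V // x ∉ S} = Fintype.card V - S.card := by
    rw [Nat.card_eq_fintype_card, Fintype.card_subtype_compl, Fintype.card_coe]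
  rw [h1, h2, Nat.mul_comm]

open SimpleGraph in
lemma getVert_eq_support_getElem {W : Type*} {G : SimpleGraph W} {a b : W}
    (p : G.Walk a b) {k : ℕ} (hk : k ≤ p.length) :
    p.getVert k = p.support[k]'(by rw [SimpleGraph.Walk.length_support]; omega) := by
  induction p generalizing k with
  | nil =>
    cases k with
    | zero => rfl
    | succ n => simp at hk
  | cons ha q ih =>
    cases k with
    | zero => simp
    | succ k =>
      rw [SimpleGraph.Walk.getVert_cons_succ]
      simp only [SimpleGraph.Walk.support_cons, List.getElem_cons_succ]
      exact ih (by simpa using hk)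

open SimpleGraph in
lemma isAcyclic_of_height {W : Type*} (G : SimpleGraph W) (h : W → ℕ) (f : W → W)
    (He : ∀ a b, G.Adj a b → (b = f a ∧ h b < h a) ∨ (a = f b ∧ h a < h b)) :
    G.IsAcyclic := by
  classical
  have key : ∀ (y : W) (c' : G.Walk y y), c'.IsCycle → (∀ z ∈ c'.support, h z ≤ h y) → False := by
    intro y c' hc' hmax
    cases c' with
    | nil => exact hc'.ne_nil rfl
    | @cons _ b _ ha q =>
      have h3 : 3 ≤ q.length + 1 := by
        have := hc'.three_le_length
        simpa using this
      have hsupc : (SimpleGraph.Walk.cons ha q).support = y :: q.support :=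
        SimpleGraph.Walk.support_cons _ _
      have hqsub : ∀ z ∈ q.support, h z ≤ h y := by
        intro z hz
        exact hmax z (by rw [hsupc]; exact List.mem_cons_of_mem _ hz)
      -- first neighbor b = f y
      have hb : b = f y := by
        rcases He y b ha with ⟨h1, _⟩ | ⟨_, h2⟩
        · exact h1
        · exact absurd (hqsub b q.start_mem_support) (by omega)
      -- last neighbor d = f y
      set d := q.getVert (q.length - 1) with hddef
      have hdadj : G.Adj d y := by
        have := q.adj_getVert_succ (i := q.length - 1) (by omega)
        rwa [show q.length - 1 + 1 = q.length from by omega, q.getVert_length] at this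
      have hdmem : d ∈ q.support :=
        SimpleGraph.Walk.mem_support_iff_exists_getVert.mpr ⟨q.length - 1, rfl, by omega⟩
      have hd : d = f y := by
        rcases He d y hdadj with ⟨h1, h2⟩ | ⟨h2, _⟩
        · exact absurd (hqsub d hdmem) (by omega)
        · exact h2
      -- q.support nodup
      have hnodup : q.support.Nodup := by
        have := hc'.support_nodup
        rwa [hsupc, List.tail_cons] at this
      have hb0 : q.getVert 0 = b := q.getVert_zero
      have hlen : q.support.length = q.length + 1 := q.length_support
      have e1 : q.support[0]'(by omega) = b := by
        rw [← getVert_eq_support_getElem q (by omega : 0 ≤ q.length), hb0]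
      have e2 : q.support[q.length - 1]'(by omega) = d := by
        rw [← getVert_eq_support_getElem q (by omega : q.length - 1 ≤ q.length)]
      have : (0 : ℕ) = q.length - 1 := by
        rw [← hnodup.getElem_inj_iff (hi := by omega) (hj := by omega)]
        rw [e1, e2, hb, hd]
      omega
  intro x c hc
  obtain ⟨y, hy, hmaxy⟩ := (c.support.toFinset).exists_max_image h ⟨x, by simp⟩
  rw [List.mem_toFinset] at hy
  refine key y (c.rotate y hy) (hc.rotate hy) ?_
  intro z hz
  apply hmaxy
  rw [List.mem_toFinset]
  have hperm := c.support_rotate y hy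
  rw [SimpleGraph.Walk.support_eq_cons (c.rotate y hy)] at hz
  rcases List.mem_cons.mp hz with rfl | hz2
  · exact hy
  · have : z ∈ c.support.tail := hperm.mem_iff.mp hz2
    rw [SimpleGraph.Walk.support_eq_cons c]
    exact List.mem_cons_of_mem _ this

section Graph

open SimpleGraph

variable {V : Type*} [DecidableEq V]

/-- stability of the orbit after escape -/
lemma iterate_stable {S : Finset V} {f : V → V} (hfix : ∀ x ∉ S, f x = x) (hgr : Gr S f)
    (x : V) {k : ℕ} (hk : ht hgr x ≤ k) : f^[k] x = f^[ht hgr x] x := by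
  induction k with
  | zero => rw [Nat.le_zero.mp hk]
  | succ k ih =>
    rcases Nat.lt_or_ge k (ht hgr x) with h | h
    · have : ht hgr x = k + 1 := by omega
      rw [this]
    · rw [Function.iterate_succ_apply', ih h, hfix _ (ht_spec hgr x)]

noncomputable def root {S : Finset V} {f : V → V} (hgr : Gr S f) (x : V) : V :=
  f^[ht hgr x] x

lemma root_not_mem {S : Finset V} {f : V → V} (hgr : Gr S f) (x : V) : root hgr x ∉ S :=
  ht_spec hgr x

lemma root_of_not_mem {S : Finset V} {f : V → V} (hgr : Gr S f) {x : V} (hx : x ∉ S) :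
    root hgr x = x := by
  have h0 : ht hgr x = 0 := Nat.eq_zero_of_le_zero (ht_le hgr (by simpa using hx))
  rw [root, h0]
  rfl

lemma root_apply {S : Finset V} {f : V → V} (hfix : ∀ x ∉ S, f x = x) (hgr : Gr S f) (x : V) :
    root hgr (f x) = root hgr x := by
  rcases em (x ∈ S) with hx | hx
  · have h1 : root hgr (f x) = f^[ht hgr (f x) + 1] x := by
      rw [root, ← Function.iterate_succ_apply]
    have h2 : f^[ht hgr (f x) + 1] x ∉ S := by
      rw [Function.iterate_succ_apply]
      exact ht_spec hgr (f x)
    have h3 : ht hgr x ≤ ht hgr (f x) + 1 := ht_le hgr h2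
    rw [h1, iterate_stable hfix hgr x h3]
    rfl
  · rw [hfix x hx]

def fromFun (S : Finset V) (f : V → V) (hgr : Gr S f) : (⊤ : SimpleGraph V).Subgraph where
  verts := Set.univ
  Adj x y := (x ∈ S ∧ f x = y) ∨ (y ∈ S ∧ f y = x)
  adj_sub := by
    rintro x y (⟨hx, rfl⟩ | ⟨hy, rfl⟩)
    · exact (SimpleGraph.top_adj _ _).mpr (ne_of_mem_gr hgr hx).symm
    · exact (SimpleGraph.top_adj _ _).mpr (ne_of_mem_gr hgr hy)
  edge_vert := fun _ => trivial
  symm := by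
    constructor
    rintro x y (⟨hx, rfl⟩ | ⟨hy, h⟩)
    · exact Or.inr ⟨hx, rfl⟩
    · exact Or.inl ⟨hy, h⟩

lemma fromFun_adj {S : Finset V} {f : V → V} {hgr : Gr S f} {x y : V} :
    (fromFun S f hgr).spanningCoe.Adj x y ↔ (x ∈ S ∧ f x = y) ∨ (y ∈ S ∧ f y = x) :=
  Iff.rfl

lemma fromFun_reach_iterate {S : Finset V} {f : V → V} (hfix : ∀ x ∉ S, f x = x) (hgr : Gr S f)
    (x : V) : ∀ k, (fromFun S f hgr).spanningCoe.Reachable x (f^[k] x) := by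
  intro k
  induction k with
  | zero => exact SimpleGraph.Reachable.refl x
  | succ k ih =>
    rw [Function.iterate_succ_apply']
    rcases em (f^[k] x ∈ S) with h | h
    · exact ih.trans (SimpleGraph.Adj.reachable (Or.inl ⟨h, rfl⟩))
    · rw [hfix _ h]
      exact ih

lemma fromFun_reach_root {S : Finset V} {f : V → V} (hfix : ∀ x ∉ S, f x = x) (hgr : Gr S f)
    (x : V) : (fromFun S f hgr).spanningCoe.Reachable x (root hgr x) :=
  fromFun_reach_iterate hfix hgr x _

lemma fromFun_root_eq_of_reachable {S : Finset V} {f : V → V} (hfix : ∀ x ∉ S, f x = x)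
    (hgr : Gr S f) {x y : V} (h : (fromFun S f hgr).spanningCoe.Reachable x y) :
    root hgr x = root hgr y := by
  obtain ⟨w⟩ := h
  induction w with
  | nil => rfl
  | cons ha q ih =>
    rw [← ih]
    rcases ha with ⟨hx, h1⟩ | ⟨hy, h1⟩
    · rw [← h1, root_apply hfix hgr]
    · rw [← h1, root_apply hfix hgr]

lemma fromFun_isAcyclic {S : Finset V} {f : V → V} (hgr : Gr S f) :
    (fromFun S f hgr).spanningCoe.IsAcyclic := by
  apply isAcyclic_of_height _ (ht hgr) f
  rintro a b (⟨ha, rfl⟩ | ⟨hb, rfl⟩)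
  · exact Or.inl ⟨rfl, ht_apply_lt hgr ha⟩
  · exact Or.inr ⟨rfl, ht_apply_lt hgr hb⟩

/-! ### the orbit walk -/

noncomputable def orbitWalk {S : Finset V} {f : V → V} (hfix : ∀ x ∉ S, f x = x) (hgr : Gr S f) :
    (x : V) → (fromFun S f hgr).spanningCoe.Walk x (root hgr x) := fun x =>
  if hx : x ∈ S then
    (SimpleGraph.Walk.cons (by exact Or.inl ⟨hx, rfl⟩ :
        (fromFun S f hgr).spanningCoe.Adj x (f x))
      (orbitWalk hfix hgr (f x))).copy rfl (root_apply hfix hgr x)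
  else
    SimpleGraph.Walk.nil.copy rfl (root_of_not_mem hgr hx).symm
termination_by x => ht hgr x
decreasing_by exact ht_apply_lt hgr hx

lemma orbitWalk_support {S : Finset V} {f : V → V} (hfix : ∀ x ∉ S, f x = x) (hgr : Gr S f) :
    ∀ (x : V), ∀ z ∈ (orbitWalk hfix hgr x).support, ht hgr z ≤ ht hgr x := by
  have main : ∀ (n : ℕ) (x : V), ht hgr x ≤ n →
      ∀ z ∈ (orbitWalk hfix hgr x).support, ht hgr z ≤ ht hgr x := by
    intro n
    induction n with
    | zero =>
      intro x hx z hz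
      rw [orbitWalk] at hz
      have hxS : x ∉ S := by
        intro hc
        have := ht_pos hgr hc
        omega
      rw [dif_neg hxS] at hz
      simp only [SimpleGraph.Walk.support_copy, SimpleGraph.Walk.support_nil,
        List.mem_singleton] at hz
      subst hz
      rfl
    | succ n ih =>
      intro x hx z hz
      rw [orbitWalk] at hz
      rcases em (x ∈ S) with hxS | hxS
      · rw [dif_pos hxS] at hz
        simp only [SimpleGraph.Walk.support_copy, SimpleGraph.Walk.support_cons,
          List.mem_cons] at hz
        change z ∈ x :: (orbitWalk hfix hgr (f x)).support at hz
        rw [List.mem_cons] at hz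
        rcases hz with rfl | hz
        · rfl
        · have hlt := ht_apply_lt hgr hxS
          have := ih (f x) (by omega) z hz
          omega
      · rw [dif_neg hxS] at hz
        simp only [SimpleGraph.Walk.support_copy, SimpleGraph.Walk.support_nil,
          List.mem_singleton] at hz
        subst hz
        rfl
  exact fun x => main (ht hgr x) x le_rfl

lemma orbitWalk_isPath {S : Finset V} {f : V → V} (hfix : ∀ x ∉ S, f x = x) (hgr : Gr S f) :
    ∀ (x : V), (orbitWalk hfix hgr x).IsPath := by
  have main : ∀ (n : ℕ) (x : V), ht hgr x ≤ n → (orbitWalk hfix hgr x).IsPath := by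
    intro n
    induction n with
    | zero =>
      intro x hx
      rw [orbitWalk]
      have hxS : x ∉ S := by
        intro hc
        have := ht_pos hgr hc
        omega
      rw [dif_neg hxS]
      simp
    | succ n ih =>
      intro x hx
      rw [orbitWalk]
      rcases em (x ∈ S) with hxS | hxS
      · rw [dif_pos hxS]
        rw [SimpleGraph.Walk.isPath_copy]
        apply SimpleGraph.Walk.IsPath.cons
        · exact ih (f x) (by have := ht_apply_lt hgr hxS; omega)
        · intro hc
          have h1 := orbitWalk_support hfix hgr (f x) x hc
          have h2 := ht_apply_lt hgr hxS
          omega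
      · rw [dif_neg hxS]
        simp
  exact fun x => main (ht hgr x) x le_rfl

lemma orbitWalk_getVert_one {S : Finset V} {f : V → V} (hfix : ∀ x ∉ S, f x = x) (hgr : Gr S f)
    {x : V} (hx : x ∈ S) : (orbitWalk hfix hgr x).getVert 1 = f x := by
  rw [orbitWalk, dif_pos hx]
  rw [SimpleGraph.Walk.getVert_copy]
  exact (orbitWalk hfix hgr (f x)).getVert_zero

end Graph

section Parent

open SimpleGraph

variable {V : Type*} [DecidableEq V]
variable {G : SimpleGraph V} {u v : V}

open Classical in
/-- the root (`u` or `v`) of the component of `w`. -/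
noncomputable def groot (G : SimpleGraph V) (u v w : V) : V :=
  if G.Reachable w u then u else v

lemma groot_reach (hre : ∀ w, G.Reachable w u ∨ G.Reachable w v) (w : V) :
    G.Reachable w (groot G u v w) := by
  rw [groot]
  split_ifs with h
  · exact h
  · exact (hre w).resolve_left h

lemma groot_mem (w : V) : groot G u v w = u ∨ groot G u v w = v := by
  rw [groot]
  split_ifs <;> simp

lemma groot_congr {w w' : V} (h : G.Reachable w w') : groot G u v w = groot G u v w' := by
  classical
  rw [groot, groot]
  have : G.Reachable w u ↔ G.Reachable w' u := ⟨fun h2 => h.symm.trans h2, fun h2 => h.trans h2⟩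
  rw [if_congr this rfl rfl]

lemma groot_u : groot G u v u = u := by rw [groot, if_pos (Reachable.refl u)]

lemma groot_v (hnr : ¬ G.Reachable u v) : groot G u v v = v := by
  rw [groot, if_neg (fun h => hnr h.symm)]

/-- the chosen path from `w` to its root -/
noncomputable def gpath (hre : ∀ w, G.Reachable w u ∨ G.Reachable w v) (w : V) :
    G.Path w (groot G u v w) :=
  (groot_reach hre w).some.toPath

/-- the parent function of the forest -/
noncomputable def parent (hre : ∀ w, G.Reachable w u ∨ G.Reachable w v) (w : V) : V :=
  if w = u ∨ w = v then w else ((gpath hre w) : G.Walk w (groot G u v w)).getVert 1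

variable (hac : G.IsAcyclic) (hnr : ¬ G.Reachable u v)
  (hre : ∀ w, G.Reachable w u ∨ G.Reachable w v)

lemma parent_of_root {w : V} (h : w = u ∨ w = v) : parent hre w = w := by
  rw [parent, if_pos h]

lemma parent_of_not_root {w : V} (hre : ∀ w, G.Reachable w u ∨ G.Reachable w v)
    (h : ¬ (w = u ∨ w = v)) :
    parent hre w = ((gpath hre w) : G.Walk w (groot G u v w)).getVert 1 := by
  unfold parent
  rw [if_neg h]

lemma groot_ne {w : V} (h : ¬ (w = u ∨ w = v)) : w ≠ groot G u v w := by
  rcases groot_mem (G := G) (u := u) (v := v) w with h1 | h1 <;>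
    · rw [h1]
      tauto

lemma gpath_not_nil {w : V} (h : ¬ (w = u ∨ w = v)) :
    ¬ ((gpath hre w) : G.Walk w (groot G u v w)).Nil :=
  SimpleGraph.Walk.not_nil_of_ne (groot_ne h)

lemma parent_adj {w : V} (h : ¬ (w = u ∨ w = v)) : G.Adj w (parent hre w) := by
  rw [parent_of_not_root hre h]
  exact SimpleGraph.Walk.adj_snd (gpath_not_nil hre h)

include hac in
/-- the path from the parent is the tail of the path from `w`. -/
lemma gpath_parent {w : V} (h : ¬ (w = u ∨ w = v)) :
    ((gpath hre (parent hre w)) : G.Walk (parent hre w) (groot G u v (parent hre w)))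
      = (((gpath hre w) : G.Walk w (groot G u v w)).tail.copy
          (parent_of_not_root hre h).symm (groot_congr (parent_adj hre h).reachable) )
          := by
  have hpath : ((((gpath hre w) : G.Walk w (groot G u v w)).tail.copy
      (parent_of_not_root hre h).symm (groot_congr (parent_adj hre h).reachable))).IsPath := by
    rw [SimpleGraph.Walk.isPath_copy]
    exact (gpath hre w).2.tail
  exact congrArg Subtype.val (hac.path_unique (gpath hre (parent hre w)) ⟨_, hpath⟩)

include hac in
lemma gpath_parent_length {w : V} (h : ¬ (w = u ∨ w = v)) :
    ((gpath hre (parent hre w)) : G.Walk (parent hre w) (groot G u v (parent hre w))).length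
      = ((gpath hre w) : G.Walk w (groot G u v w)).length - 1 := by
  rw [gpath_parent hac hre h, SimpleGraph.Walk.length_copy]
  have := SimpleGraph.Walk.length_tail_add_one (gpath_not_nil hre h)
  omega

include hac in
lemma parent_gr : ∀ w : V, ∃ m, (parent hre)^[m] w = u ∨ (parent hre)^[m] w = v := by
  have main : ∀ (n : ℕ) (w : V), ((gpath hre w) : G.Walk w (groot G u v w)).length ≤ n →
      ∃ m, (parent hre)^[m] w = u ∨ (parent hre)^[m] w = v := by
    intro n
    induction n with
    | zero =>
      intro w hw
      refine ⟨0, ?_⟩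
      by_contra hc
      push_neg at hc
      have := gpath_not_nil hre (w := w) (by tauto)
      rw [SimpleGraph.Walk.not_nil_iff_lt_length] at this
      omega
    | succ n ih =>
      intro w hw
      by_cases hww : w = u ∨ w = v
      · exact ⟨0, hww⟩
      · have hlen := gpath_parent_length hac hre hww
        have hpos : 0 < ((gpath hre w) : G.Walk w (groot G u v w)).length := by
          rw [← SimpleGraph.Walk.not_nil_iff_lt_length]
          exact gpath_not_nil hre hww
        obtain ⟨m, hm⟩ := ih (parent hre w) (by omega)
        exact ⟨m + 1, by rwa [Function.iterate_succ_apply]⟩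
  exact fun w => main _ w le_rfl

include hac in
lemma parent_good [Fintype V] (huv : u ≠ v) :
    Good (({u, v} : Finset V)ᶜ) (parent hre) := by
  constructor
  · intro x hx
    simp only [Finset.mem_compl, not_not, Finset.mem_insert, Finset.mem_singleton] at hx
    exact parent_of_root hre hx
  · intro x
    obtain ⟨m, hm⟩ := parent_gr hac hre x
    refine ⟨m, ?_⟩
    simp only [Finset.mem_compl, not_not, Finset.mem_insert, Finset.mem_singleton]
    exact hm

lemma isPath_loop_nil {W : Type*} {G : SimpleGraph W} {a : W} {p : G.Walk a a}
    (hp : p.IsPath) : p.Nil := by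
  cases p with
  | nil => exact SimpleGraph.Walk.Nil.nil
  | cons ha q =>
    exfalso
    have h1 := hp.support_nodup
    rw [SimpleGraph.Walk.support_cons] at h1
    exact (List.nodup_cons.mp h1).1 q.end_mem_support

lemma groot_self (hnr : ¬ G.Reachable u v) {y : V} (hy : y = u ∨ y = v) :
    groot G u v y = y := by
  rcases hy with rfl | rfl
  · exact groot_u
  · exact groot_v hnr

lemma groot_eq_u' {w : V} (h : G.Reachable w u) : groot G u v w = u := by
  rw [groot, if_pos h]

lemma groot_eq_v' {w : V} (h : ¬ G.Reachable w u) : groot G u v w = v := by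
  rw [groot, if_neg h]

include hac hnr in
lemma adj_parent_cases {x y : V} (hadj : G.Adj x y) :
    (¬ (x = u ∨ x = v) ∧ parent hre x = y) ∨ (¬ (y = u ∨ y = v) ∧ parent hre y = x) := by
  have hrxy : groot G u v x = groot G u v y := groot_congr hadj.reachable
  by_cases hx : x ∈ ((gpath hre y) : G.Walk y (groot G u v y)).support
  · -- x lies on the path from y : then y is not a root and parent y = x
    right
    have hy : ¬ (y = u ∨ y = v) := by
      intro hy
      have hnil : (((gpath hre y) : G.Walk y (groot G u v y)).copy rfl
          (groot_self hnr hy)).Nil := by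
        apply isPath_loop_nil (a := y)
        rw [SimpleGraph.Walk.isPath_copy]
        exact (gpath hre y).2
      rw [SimpleGraph.Walk.nil_iff_support_eq, SimpleGraph.Walk.support_copy] at hnil
      rw [hnil] at hx
      simp only [List.mem_singleton] at hx
      exact hadj.ne hx
    refine ⟨hy, ?_⟩
    have hq : ((gpath hre y) : G.Walk y (groot G u v y)).takeUntil x hx
        = (SimpleGraph.Path.singleton hadj.symm : G.Walk y x) :=
      congrArg Subtype.val
        (hac.path_unique ⟨_, (gpath hre y).2.takeUntil hx⟩ (SimpleGraph.Path.singleton hadj.symm))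
    rw [parent_of_not_root hre hy]
    conv_lhs => rw [← SimpleGraph.Walk.take_spec _ hx]
    rw [hq]
    rw [SimpleGraph.Path.singleton, SimpleGraph.Walk.cons_append,
      SimpleGraph.Walk.nil_append]
    rw [show (1 : ℕ) = 0 + 1 from rfl, SimpleGraph.Walk.getVert_cons_succ,
      SimpleGraph.Walk.getVert_zero]
  · -- x not on the path from y : x is not a root and parent x = y
    left
    have hxr : ¬ (x = u ∨ x = v) := by
      intro hxr
      apply hx
      have : groot G u v y = x := by rw [← hrxy, groot_self hnr hxr]
      rw [← this] at hx ⊢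
      exact SimpleGraph.Walk.end_mem_support _
    refine ⟨hxr, ?_⟩
    have hpath : ((SimpleGraph.Walk.cons hadj
        ((gpath hre y) : G.Walk y (groot G u v y))).copy rfl hrxy.symm).IsPath := by
      rw [SimpleGraph.Walk.isPath_copy]
      exact SimpleGraph.Walk.IsPath.cons (gpath hre y).2 hx
    have hq : ((gpath hre x) : G.Walk x (groot G u v x))
        = (SimpleGraph.Walk.cons hadj
            ((gpath hre y) : G.Walk y (groot G u v y))).copy rfl hrxy.symm :=
      congrArg Subtype.val (hac.path_unique (gpath hre x) ⟨_, hpath⟩)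
    rw [parent_of_not_root hre hxr, hq, SimpleGraph.Walk.getVert_copy]
    rw [show (1 : ℕ) = 0 + 1 from rfl, SimpleGraph.Walk.getVert_cons_succ,
      SimpleGraph.Walk.getVert_zero]

end Parent

section Main

open SimpleGraph

variable {V : Type*} [Fintype V] [DecidableEq V] [LinearOrder V] {u v : V}

lemma mem_pairCompl_iff {w : V} : w ∈ ({u, v} : Finset V)ᶜ ↔ ¬ (w = u ∨ w = v) := by
  simp only [Finset.mem_compl, Finset.mem_insert, Finset.mem_singleton]

lemma fromFun_isSpanning {f : V → V} (hgr : Gr (({u, v} : Finset V)ᶜ) f) :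
    (fromFun (({u, v} : Finset V)ᶜ) f hgr).IsSpanning := fun _ => trivial

lemma fromFun_not_reach {f : V → V} (hf : Good (({u, v} : Finset V)ᶜ) f) (huv : u ≠ v) :
    ¬ (fromFun (({u, v} : Finset V)ᶜ) f hf.2).spanningCoe.Reachable u v := by
  intro h
  have h2 := fromFun_root_eq_of_reachable hf.1 hf.2 h
  have hu : root hf.2 u = u := root_of_not_mem hf.2 (by rw [mem_pairCompl_iff]; tauto)
  have hv : root hf.2 v = v := root_of_not_mem hf.2 (by rw [mem_pairCompl_iff]; tauto)
  rw [hu, hv] at h2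
  exact huv h2

lemma fromFun_reach_or {f : V → V} (hf : Good (({u, v} : Finset V)ᶜ) f) :
    ∀ w, (fromFun (({u, v} : Finset V)ᶜ) f hf.2).spanningCoe.Reachable w u ∨
      (fromFun (({u, v} : Finset V)ᶜ) f hf.2).spanningCoe.Reachable w v := by
  intro w
  have h1 := fromFun_reach_root hf.1 hf.2 w
  have h2 := root_not_mem hf.2 w
  rw [mem_pairCompl_iff, not_not] at h2
  rcases h2 with h2 | h2
  · left; rwa [h2] at h1
  · right; rwa [h2] at h1

lemma parent_fromFun {f : V → V} (hf : Good (({u, v} : Finset V)ᶜ) f) (huv : u ≠ v)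
    (hre : ∀ w, (fromFun (({u, v} : Finset V)ᶜ) f hf.2).spanningCoe.Reachable w u ∨
      (fromFun (({u, v} : Finset V)ᶜ) f hf.2).spanningCoe.Reachable w v) :
    parent hre = f := by
  set G' := (fromFun (({u, v} : Finset V)ᶜ) f hf.2).spanningCoe with hG'
  funext w
  by_cases hw : w = u ∨ w = v
  · rw [parent_of_root hre hw]
    exact (hf.1 w (by rw [mem_pairCompl_iff]; tauto)).symm
  · have hwS : w ∈ ({u, v} : Finset V)ᶜ := mem_pairCompl_iff.mpr hw
    have hroot : root hf.2 w = groot G' u v w := by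
      have h2 := root_not_mem hf.2 w
      rw [mem_pairCompl_iff, not_not] at h2
      rcases h2 with h2 | h2
      · rw [h2, groot_eq_u' (h2 ▸ fromFun_reach_root hf.1 hf.2 w)]
      · rw [h2, groot_eq_v']
        intro hc
        have h3 := fromFun_root_eq_of_reachable hf.1 hf.2 hc
        rw [h2, root_of_not_mem hf.2 (by rw [mem_pairCompl_iff]; tauto)] at h3
        exact huv h3.symm
    have hOP : gpath hre w = ⟨(orbitWalk hf.1 hf.2 w).copy rfl hroot,
        by rw [SimpleGraph.Walk.isPath_copy]; exact orbitWalk_isPath hf.1 hf.2 w⟩ :=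
      (fromFun_isAcyclic hf.2).path_unique _ _
    rw [parent_of_not_root hre hw, congrArg Subtype.val hOP]
    rw [SimpleGraph.Walk.getVert_copy]
    exact orbitWalk_getVert_one hf.1 hf.2 hwS

noncomputable def forestEquiv (huv : u ≠ v) :
    {H : (⊤ : SimpleGraph V).Subgraph //
        H.IsSpanning ∧ H.spanningCoe.IsAcyclic ∧
        ¬ H.spanningCoe.Reachable u v ∧
        (∀ w : V, H.spanningCoe.Reachable w u ∨ H.spanningCoe.Reachable w v)} ≃
      {f : V → V // Good (({u, v} : Finset V)ᶜ) f} where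
  toFun H := ⟨parent H.2.2.2.2, parent_good H.2.2.1 H.2.2.2.2 huv⟩
  invFun f := ⟨fromFun (({u, v} : Finset V)ᶜ) f.1 f.2.2,
    fromFun_isSpanning f.2.2, fromFun_isAcyclic f.2.2, fromFun_not_reach f.2 huv,
    fromFun_reach_or f.2⟩
  left_inv := by
    rintro ⟨H, hsp, hac, hnr, hre⟩
    apply Subtype.ext
    simp only
    apply SimpleGraph.Subgraph.ext
    · exact (SimpleGraph.Subgraph.isSpanning_iff.mp hsp).symm
    · funext x y
      apply propext
      constructor
      · rintro (⟨hx, hp⟩ | ⟨hy, hp⟩)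
        · exact hp ▸ parent_adj hre (mem_pairCompl_iff.mp hx)
        · exact (hp ▸ parent_adj hre (mem_pairCompl_iff.mp hy)).symm
      · intro hadj
        have h2 := adj_parent_cases hac hnr hre (show H.spanningCoe.Adj x y from hadj)
        rcases h2 with ⟨h3, h4⟩ | ⟨h3, h4⟩
        · exact Or.inl ⟨mem_pairCompl_iff.mpr h3, h4⟩
        · exact Or.inr ⟨mem_pairCompl_iff.mpr h3, h4⟩
  right_inv := by
    rintro ⟨f, hf⟩
    apply Subtype.ext
    exact parent_fromFun hf huv _

theorem card_forest (huv : u ≠ v) (hN : 3 ≤ Fintype.card V) :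
    Nat.card {H : (⊤ : SimpleGraph V).Subgraph //
        H.IsSpanning ∧ H.spanningCoe.IsAcyclic ∧
        ¬ H.spanningCoe.Reachable u v ∧
        (∀ w : V, H.spanningCoe.Reachable w u ∨ H.spanningCoe.Reachable w v)}
      = (Fintype.card V - (Fintype.card V - 2)) *
          (Fintype.card V) ^ (Fintype.card V - 2 - 1) := by
  have hcard2 : ({u, v} : Finset V).card = 2 := by
    rw [Finset.card_insert_of_notMem (by simpa using huv), Finset.card_singleton]
  have hcardc : (({u, v} : Finset V)ᶜ).card = Fintype.card V - 2 := by
    rw [Finset.card_compl, hcard2]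
  have hVcard : 2 ≤ Fintype.card V := by
    rw [← hcard2]
    exact Finset.card_le_univ _
  have hne : (({u, v} : Finset V)ᶜ).Nonempty := by
    rw [← Finset.card_pos, hcardc]
    omega
  rw [Nat.card_congr (forestEquiv huv), card_good _ hne, hcardc]

end Main

end TwoForest

theorem two_component_spanning_forests_of_complete_graph
    (N : ℕ) (hN : 3 ≤ N) (u v : Fin N) (huv : u ≠ v) :
    Nat.card {H : (⊤ : SimpleGraph (Fin N)).Subgraph //
        H.IsSpanning ∧ H.spanningCoe.IsAcyclic ∧
        ¬ H.spanningCoe.Reachable u v ∧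
        (∀ w : Fin N, H.spanningCoe.Reachable w u ∨ H.spanningCoe.Reachable w v)}
      = 2 * N ^ (N - 3) := by
  rw [TwoForest.card_forest huv (by rwa [Fintype.card_fin])]
  rw [Fintype.card_fin]
  have h1 : N - (N - 2) = 2 := by omega
  have h2 : N - 2 - 1 = N - 3 := by omega
  rw [h1, h2]
end

section
/- For the complete graph K_N, if χ₁ = N^(N-2) is the number of spanning trees and χ₂ the number of spanning forests with two components separating two fixed vertices, then the multiset identity binomial(N,2) * χ₂ = (N-1) * χ₁ holds. -/
open SimpleGraph

namespace SpanTreeAux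

variable {V : Type*}

/-- The predicate on a graph of being a two-component spanning forest separating `a` and `b`. -/
def Good (G : SimpleGraph V) (a b : V) : Prop :=
  G.IsAcyclic ∧ ¬ G.Reachable a b ∧ (∀ w : V, G.Reachable w a ∨ G.Reachable w b)

lemma isAcyclic_mono {G H : SimpleGraph V} (h : G ≤ H) (hH : H.IsAcyclic) :
    G.IsAcyclic := fun _ c hc =>
  hH (c.mapLe h) ((SimpleGraph.Walk.mapLe_isCycle h).mpr hc)

lemma isAcyclic_of_iso {W : Type*} {G : SimpleGraph V} {H : SimpleGraph W}
    (φ : G ≃g H) (hG : G.IsAcyclic) : H.IsAcyclic := by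
  intro u c hc
  exact hG (c.map φ.symm.toHom)
    ((SimpleGraph.Walk.map_isCycle_iff_of_injective φ.symm.injective).mpr hc)

lemma reachable_or_of_walk_aux {G : SimpleGraph V} (a b : V) {w x : V} (p : G.Walk w x) :
    (G \ fromEdgeSet {s(a, b)}).Reachable w x ∨
      (G \ fromEdgeSet {s(a, b)}).Reachable w a ∨
      (G \ fromEdgeSet {s(a, b)}).Reachable w b := by
  induction p with
  | nil => exact Or.inl Reachable.rfl
  | @cons c d e h q ih =>
    by_cases he : s(c, d) = s(a, b)
    · rw [Sym2.eq_iff] at he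
      rcases he with ⟨rfl, rfl⟩ | ⟨rfl, rfl⟩
      · exact Or.inr (Or.inl Reachable.rfl)
      · exact Or.inr (Or.inr Reachable.rfl)
    · have hadj : (G \ fromEdgeSet {s(a, b)}).Adj c d := by
        simp only [sdiff_adj, fromEdgeSet_adj, Set.mem_singleton_iff]
        exact ⟨h, fun hc => he hc.1⟩
      rcases ih with h1 | h1 | h1
      · exact Or.inl (hadj.reachable.trans h1)
      · exact Or.inr (Or.inl (hadj.reachable.trans h1))
      · exact Or.inr (Or.inr (hadj.reachable.trans h1))

lemma reachable_or_of_walk {G : SimpleGraph V} (a b : V) {w : V} (p : G.Walk w a) :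
    (G \ fromEdgeSet {s(a, b)}).Reachable w a ∨ (G \ fromEdgeSet {s(a, b)}).Reachable w b := by
  rcases reachable_or_of_walk_aux a b p with h | h | h
  · exact Or.inl h
  · exact Or.inl h
  · exact Or.inr h

lemma isAcyclic_sup_edge {G : SimpleGraph V} {a b : V} (hab : a ≠ b)
    (hG : G.IsAcyclic) (hreach : ¬ G.Reachable a b) : (G ⊔ edge a b).IsAcyclic := by
  intro u c hc
  by_cases he : s(a, b) ∈ c.edges
  · have h2 := (adj_and_reachable_delete_edges_iff_exists_cycle.mpr ⟨u, c, hc, he⟩).2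
    exact hreach (h2.mono (fun x y hxy => by
      rw [deleteEdges_adj, sup_adj] at hxy
      rcases hxy.1 with h | h
      · exact h
      · exact absurd h.1 hxy.2))
  · have hsub : ∀ e ∈ c.edges, e ∈ G.edgeSet := by
      intro e hee
      have h3 := c.edges_subset_edgeSet hee
      rw [edgeSet_sup] at h3
      rcases h3 with h1 | h1
      · exact h1
      · rw [edge_edgeSet_of_ne hab, Set.mem_singleton_iff] at h1
        exact absurd (h1 ▸ hee) he
    exact hG (c.transfer G hsub) (hc.transfer _)

lemma connected_sup_edge {G : SimpleGraph V} {a b : V} (hab : a ≠ b)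
    (h : ∀ w, G.Reachable w a ∨ G.Reachable w b) : (G ⊔ edge a b).Connected := by
  rw [connected_iff_exists_forall_reachable]
  refine ⟨a, fun w => ?_⟩
  have hedge : (G ⊔ edge a b).Adj a b := by
    rw [sup_adj, edge_adj]
    exact Or.inr ⟨Or.inl ⟨rfl, rfl⟩, hab⟩
  rcases h w with h1 | h1
  · exact (h1.mono (le_sup_left : G ≤ G ⊔ edge a b)).symm
  · exact hedge.reachable.trans (h1.mono (le_sup_left : G ≤ G ⊔ edge a b)).symm

lemma disjoint_edge {G : SimpleGraph V} {a b : V} (h : ¬ G.Adj a b) :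
    Disjoint G (edge a b) := by
  rw [disjoint_iff]
  ext x y
  simp only [inf_adj, bot_adj, iff_false]
  rintro ⟨hxy, h2⟩
  rw [edge_adj] at h2
  rcases h2.1 with ⟨rfl, rfl⟩ | ⟨rfl, rfl⟩
  · exact h hxy
  · exact h hxy.symm

lemma dart_heq {G G' : SimpleGraph V} (h : G = G') (d : G.Dart) (d' : G'.Dart)
    (hp : d.toProd = d'.toProd) : HEq d d' := by
  subst h
  exact heq_of_eq (SimpleGraph.Dart.ext _ _ hp)

/-- The main double-counting bijection. -/
noncomputable def mainEquiv :
    (Σ p : {p : V × V // p.1 ≠ p.2}, {G : SimpleGraph V // Good G p.1.1 p.1.2}) ≃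
      (Σ T : {G : SimpleGraph V // G.IsAcyclic ∧ G.Connected}, T.1.Dart) where
  toFun x :=
    ⟨⟨x.2.1 ⊔ edge x.1.1.1 x.1.1.2,
      isAcyclic_sup_edge x.1.2 x.2.2.1 x.2.2.2.1,
      connected_sup_edge x.1.2 x.2.2.2.2⟩,
     ⟨(x.1.1.1, x.1.1.2), by
        rw [sup_adj, edge_adj]
        exact Or.inr ⟨Or.inl ⟨rfl, rfl⟩, x.1.2⟩⟩⟩
  invFun y :=
    ⟨⟨(y.2.fst, y.2.snd), y.2.adj.ne⟩,
      ⟨y.1.1 \ fromEdgeSet {s(y.2.fst, y.2.snd)},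
        isAcyclic_mono sdiff_le y.1.2.1,
        (isAcyclic_iff_forall_adj_isBridge.mp y.1.2.1 y.2.adj),
        fun w => (y.1.2.2.preconnected w y.2.fst).elim
          (fun p => reachable_or_of_walk _ _ p)⟩⟩
  left_inv := by
    rintro ⟨⟨⟨a, b⟩, hab⟩, ⟨G, hG⟩⟩
    have hGadj : ¬ G.Adj a b := fun h => hG.2.1 h.reachable
    have hgraph : (G ⊔ edge a b) \ fromEdgeSet {s(a, b)} = G := by
      have : (edge a b : SimpleGraph V) = fromEdgeSet {s(a, b)} := rfl
      rw [← this]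
      exact (disjoint_edge hGadj).sup_sdiff_cancel_right
    exact Sigma.ext rfl (heq_of_eq (Subtype.ext hgraph))
  right_inv := by
    rintro ⟨⟨T, hT⟩, d⟩
    have hle : edge d.fst d.snd ≤ T := by
      intro x y hxy
      rw [edge_adj] at hxy
      rcases hxy.1 with ⟨rfl, rfl⟩ | ⟨rfl, rfl⟩
      · exact d.adj
      · exact d.adj.symm
    have hgraph : (T \ fromEdgeSet {s(d.fst, d.snd)}) ⊔ edge d.fst d.snd = T := by
      have : (edge d.fst d.snd : SimpleGraph V) = fromEdgeSet {s(d.fst, d.snd)} := rfl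
      rw [this] at hle ⊢
      exact sdiff_sup_cancel hle
    exact Sigma.ext (Subtype.ext hgraph) (dart_heq hgraph _ d rfl)

end SpanTreeAux

namespace SpanTreeAux

variable {V : Type*}

lemma map_map_symm (σ : Equiv.Perm V) (G : SimpleGraph V) :
    (G.map σ.toEmbedding).map σ.symm.toEmbedding = G := by
  ext x y
  simp only [SimpleGraph.map_adj]
  simp only [SimpleGraph.map_adj, Equiv.coe_toEmbedding]
  constructor
  · rintro ⟨c, d, ⟨e, f, hef, rfl, rfl⟩, hx, hy⟩
    rw [Equiv.symm_apply_apply] at hx hy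
    subst hx; subst hy
    exact hef
  · intro h
    exact ⟨σ x, σ y, ⟨x, y, h, rfl, rfl⟩, σ.symm_apply_apply x, σ.symm_apply_apply y⟩

/-- The permutation action on graphs. -/
def graphPermEquiv (σ : Equiv.Perm V) : SimpleGraph V ≃ SimpleGraph V where
  toFun G := G.map σ.toEmbedding
  invFun G := G.map σ.symm.toEmbedding
  left_inv G := map_map_symm σ G
  right_inv G := by simpa using map_map_symm σ.symm G

lemma good_iff (σ : Equiv.Perm V) (G : SimpleGraph V) (u v : V) :
    Good (G.map σ.toEmbedding) (σ u) (σ v) ↔ Good G u v := by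
  let φ : G ≃g G.map σ.toEmbedding := Iso.map σ G
  have hre : ∀ x y : V, (G.map σ.toEmbedding).Reachable (σ x) (σ y) ↔ G.Reachable x y :=
    fun x y => Iso.reachable_iff (φ := φ)
  have hre2 : ∀ (w x : V),
      (G.map σ.toEmbedding).Reachable w (σ x) ↔ G.Reachable (σ.symm w) x :=
    fun w x => (Iso.symm_apply_reachable (φ := φ) (v := w) (u := x)).symm
  constructor
  · rintro ⟨h1, h2, h3⟩
    refine ⟨isAcyclic_of_iso φ.symm h1, fun h => h2 ((hre u v).mpr h), fun w => ?_⟩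
    rcases h3 (σ w) with h | h
    · exact Or.inl ((hre w u).mp h)
    · exact Or.inr ((hre w v).mp h)
  · rintro ⟨h1, h2, h3⟩
    refine ⟨isAcyclic_of_iso φ h1, fun h => h2 ((hre u v).mp h), fun w => ?_⟩
    rcases h3 (σ.symm w) with h | h
    · exact Or.inl ((hre2 w u).mpr h)
    · exact Or.inr ((hre2 w v).mpr h)

lemma card_forest [DecidableEq V] (u v a b : V) (huv : u ≠ v) (hab : a ≠ b) :
    Nat.card {G : SimpleGraph V // Good G a b} = Nat.card {G : SimpleGraph V // Good G u v} := by
  obtain ⟨σ, hu, hv⟩ : ∃ σ : Equiv.Perm V, σ u = a ∧ σ v = b := by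
    have h1 : Equiv.swap u a v ≠ a := by
      rw [Ne, Equiv.apply_eq_iff_eq_symm_apply, Equiv.symm_swap, Equiv.swap_apply_right]
      exact Ne.symm huv
    refine ⟨(Equiv.swap u a).trans (Equiv.swap (Equiv.swap u a v) b), ?_, ?_⟩
    · rw [Equiv.trans_apply, Equiv.swap_apply_left]
      exact Equiv.swap_apply_of_ne_of_ne (Ne.symm h1) hab
    · rw [Equiv.trans_apply]
      exact Equiv.swap_apply_left _ _
  subst hu; subst hv
  exact (Nat.card_congr (Equiv.subtypeEquiv (graphPermEquiv σ)
    (fun G => (good_iff σ G u v).symm))).symm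

/-- Spanning subgraphs of the complete graph biject with simple graphs. -/
def spanningEquiv (P : SimpleGraph V → Prop) :
    {H : (⊤ : SimpleGraph V).Subgraph // H.IsSpanning ∧ P H.spanningCoe} ≃
      {G : SimpleGraph V // P G} where
  toFun H := ⟨H.1.spanningCoe, H.2.2⟩
  invFun G := ⟨⟨Set.univ, G.1.Adj, fun h => h.ne, fun _ => Set.mem_univ _, G.1.symm⟩,
    fun _ => Set.mem_univ _, G.2⟩
  left_inv H := Subtype.ext
    (SimpleGraph.Subgraph.ext ((Set.eq_univ_of_forall H.2.1).symm) rfl)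
  right_inv G := Subtype.ext rfl

end SpanTreeAux

theorem spanning_tree_forest_double_counting
    (N : ℕ) (hN : 3 ≤ N) (u v : Fin N) (huv : u ≠ v)
    (χ₁ χ₂ : ℕ)
    (hχ₁ : χ₁ = Nat.card {H : (⊤ : SimpleGraph (Fin N)).Subgraph //
        H.IsSpanning ∧ H.spanningCoe.IsAcyclic ∧ H.spanningCoe.Connected})
    (hχ₁card : χ₁ = N ^ (N - 2))
    (hχ₂ : χ₂ = Nat.card {H : (⊤ : SimpleGraph (Fin N)).Subgraph //
        H.IsSpanning ∧ H.spanningCoe.IsAcyclic ∧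
        ¬ H.spanningCoe.Reachable u v ∧
        (∀ w : Fin N, H.spanningCoe.Reachable w u ∨ H.spanningCoe.Reachable w v)}) :
    Nat.choose N 2 * χ₂ = (N - 1) * χ₁ := by
  classical
  have hχ₁' : χ₁ = Nat.card {G : SimpleGraph (Fin N) // G.IsAcyclic ∧ G.Connected} := by
    rw [hχ₁]
    exact Nat.card_congr (SpanTreeAux.spanningEquiv (fun G => G.IsAcyclic ∧ G.Connected))
  have hχ₂' : χ₂ = Nat.card {G : SimpleGraph (Fin N) // SpanTreeAux.Good G u v} := by
    rw [hχ₂]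
    exact Nat.card_congr (SpanTreeAux.spanningEquiv (fun G => G.IsAcyclic ∧
      ¬ G.Reachable u v ∧ (∀ w : Fin N, G.Reachable w u ∨ G.Reachable w v)))
  have hmain := Nat.card_congr (SpanTreeAux.mainEquiv (V := Fin N))
  rw [Nat.card_eq_fintype_card, Nat.card_eq_fintype_card, Fintype.card_sigma,
    Fintype.card_sigma] at hmain
  have hforest : ∀ p : {p : Fin N × Fin N // p.1 ≠ p.2},
      Fintype.card {G : SimpleGraph (Fin N) // SpanTreeAux.Good G p.1.1 p.1.2} = χ₂ := by
    intro p
    rw [← Nat.card_eq_fintype_card, SpanTreeAux.card_forest u v p.1.1 p.1.2 huv p.2, ← hχ₂']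
  have htree : ∀ T : {G : SimpleGraph (Fin N) // G.IsAcyclic ∧ G.Connected},
      Fintype.card T.1.Dart = 2 * (N - 1) := by
    intro T
    rw [SimpleGraph.dart_card_eq_twice_card_edges]
    congr 1
    have h := SimpleGraph.IsTree.card_edgeFinset ⟨T.2.2, T.2.1⟩
    rw [Fintype.card_fin] at h
    omega
  rw [Finset.sum_congr rfl (fun p _ => hforest p),
    Finset.sum_congr rfl (fun T _ => htree T), Finset.sum_const, Finset.sum_const,
    smul_eq_mul, smul_eq_mul, Finset.card_univ, Finset.card_univ] at hmain
  have hcardp : Fintype.card {p : Fin N × Fin N // p.1 ≠ p.2} = N * N - N := by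
    have hfil : (Finset.univ.filter fun p : Fin N × Fin N => p.1 ≠ p.2)
        = (Finset.univ : Finset (Fin N)).offDiag := by
      ext p
      simp [Finset.mem_offDiag]
    rw [Fintype.card_subtype, hfil, Finset.offDiag_card, Finset.card_univ, Fintype.card_fin]
  have hcardt : Fintype.card {G : SimpleGraph (Fin N) // G.IsAcyclic ∧ G.Connected} = χ₁ := by
    rw [← Nat.card_eq_fintype_card, ← hχ₁']
  rw [hcardp, hcardt] at hmain
  -- hmain : (N * N - N) * χ₂ = χ₁ * (2 * (N - 1))
  have h2d : 2 ∣ N * (N - 1) := by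
    obtain ⟨n, rfl⟩ : ∃ n, N = n + 1 := ⟨N - 1, by omega⟩
    simpa [Nat.mul_comm] using (Nat.even_mul_succ_self n).two_dvd
  have hch : 2 * Nat.choose N 2 = N * (N - 1) := by
    rw [Nat.choose_two_right]
    exact Nat.mul_div_cancel' h2d
  have hnn : N * (N - 1) = N * N - N := by
    rw [Nat.mul_sub, Nat.mul_one]
  apply Nat.eq_of_mul_eq_mul_left (show 0 < 2 by norm_num)
  calc 2 * (Nat.choose N 2 * χ₂) = (2 * Nat.choose N 2) * χ₂ := by ring
    _ = (N * (N - 1)) * χ₂ := by rw [hch]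
    _ = (N * N - N) * χ₂ := by rw [hnn]
    _ = χ₁ * (2 * (N - 1)) := hmain
    _ = 2 * ((N - 1) * χ₁) := by ring
end

section
/- Let N ≥ 2, 1 ≤ ℓ ≤ N, m = N - ℓ, θ ∈ ℝ, α = -1 - (N-1) cos θ, β = α + i sin θ. Let L(θ) = J_N - (1 + (N-1) cos θ) I_N + i sin θ · Π, where Π is the diagonal projection onto the first ℓ coordinates. Then det L(θ) = β^ℓ α^m + ℓ β^{ℓ-1} α^m + m β^ℓ α^{m-1}. -/
open Matrix Finset

/-- Matrix determinant lemma for diagonal + all-ones, invertible case. -/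
lemma det_diag_add_ones_aux {n : ℕ} (d : Fin n → ℂ) (hd : ∀ i, d i ≠ 0) :
    (Matrix.diagonal d + Matrix.of (fun _ _ => (1:ℂ))).det
      = ∏ i, d i + ∑ i, ∏ j ∈ Finset.univ.erase i, d j := by
  have h1 : (Matrix.of (fun _ _ => (1:ℂ)) : Matrix (Fin n) (Fin n) ℂ)
      = (Matrix.replicateCol Unit (fun _ => (1:ℂ)) : Matrix (Fin n) Unit ℂ)
        * (Matrix.replicateRow Unit (fun _ => (1:ℂ)) : Matrix Unit (Fin n) ℂ) := by
    ext i j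
    simp [Matrix.mul_apply]
  have hA : IsUnit (Matrix.diagonal d).det := by
    rw [Matrix.det_diagonal]
    exact (Finset.prod_ne_zero_iff.mpr fun i _ => hd i).isUnit
  rw [h1, Matrix.det_add_replicateCol_mul_replicateRow hA, Matrix.inv_diagonal, Matrix.det_diagonal]
  have h2 : ((1 : Matrix Unit Unit ℂ) + (Matrix.replicateRow Unit (fun _ => (1:ℂ)) : Matrix Unit (Fin n) ℂ)
      * Matrix.diagonal (Ring.inverse d)
      * (Matrix.replicateCol Unit (fun _ => (1:ℂ)) : Matrix (Fin n) Unit ℂ)).det = 1 + ∑ i, (d i)⁻¹ := by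
    have hinv : Ring.inverse d = fun i => (d i)⁻¹ :=
      Ring.inverse_unit ⟨d, fun i => (d i)⁻¹,
        funext fun i => mul_inv_cancel₀ (hd i), funext fun i => inv_mul_cancel₀ (hd i)⟩
    rw [Matrix.det_unique]
    simp [Matrix.mul_apply, Matrix.diagonal, hinv]
  rw [h2, mul_add, mul_one, Finset.mul_sum]
  congr 1
  refine Finset.sum_congr rfl fun i _ => ?_
  rw [← Finset.mul_prod_erase Finset.univ d (Finset.mem_univ i)]
  field_simp [hd i]

/-- Matrix determinant lemma for diagonal + all-ones, general case, by density. -/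
lemma det_diag_add_ones {n : ℕ} (d : Fin n → ℂ) :
    (Matrix.diagonal d + Matrix.of (fun _ _ => (1:ℂ))).det
      = ∏ i, d i + ∑ i, ∏ j ∈ Finset.univ.erase i, d j := by
  set F : ℂ → ℂ := fun t =>
    (Matrix.diagonal (fun i => d i + t) + Matrix.of (fun _ _ => (1:ℂ))).det with hF
  set G : ℂ → ℂ := fun t =>
    ∏ i, (d i + t) + ∑ i, ∏ j ∈ Finset.univ.erase i, (d j + t) with hG
  have hFc : Continuous F := by
    apply Continuous.matrix_det
    apply continuous_matrix
    intro i j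
    simp only [Matrix.add_apply, Matrix.diagonal, Matrix.of_apply]
    split_ifs <;> fun_prop
  have hGc : Continuous G := by
    apply Continuous.add
    · exact continuous_finset_prod _ fun i _ => by fun_prop
    · exact continuous_finset_sum _ fun i _ =>
        continuous_finset_prod _ fun j _ => by fun_prop
  have hdense : Dense ((Set.range (fun i => -d i))ᶜ : Set ℂ) :=
    (Set.finite_range _).countable.dense_compl ℂ
  have heq : Set.EqOn F G ((Set.range (fun i => -d i))ᶜ : Set ℂ) := by
    intro t ht
    have hne : ∀ i, d i + t ≠ 0 := by
      intro i h
      exact ht ⟨i, by linear_combination -h⟩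
    exact det_diag_add_ones_aux (fun i => d i + t) hne
  have : F = G := hFc.ext_on hdense hGc heq
  have h0 := congrFun this 0
  simpa [F, G] using h0

theorem complete_graph_generalized_laplacian_det
    (N ℓ : ℕ) (hN : 2 ≤ N) (hℓ1 : 1 ≤ ℓ) (hℓN : ℓ ≤ N) (m : ℕ) (hm : m = N - ℓ)
    (θ : ℝ) (α β : ℂ)
    (hα : α = -1 - ((N : ℂ) - 1) * Real.cos θ)
    (hβ : β = α + Real.sin θ * Complex.I) :
    let Pi0 : Matrix (Fin N) (Fin N) ℂ :=
      Matrix.diagonal fun i => if (i : ℕ) < ℓ then 1 else 0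
    let L : Matrix (Fin N) (Fin N) ℂ :=
      (Matrix.of fun _ _ => (1 : ℂ))
        - (1 + ((N : ℂ) - 1) * Real.cos θ) • (1 : Matrix (Fin N) (Fin N) ℂ)
        + (Real.sin θ * Complex.I) • Pi0
    L.det = β ^ ℓ * α ^ m + ℓ * β ^ (ℓ - 1) * α ^ m + m * β ^ ℓ * α ^ (m - 1) := by
  intro Pi0 L
  set d : Fin N → ℂ := fun i => if (i : ℕ) < ℓ then β else α with hd
  have hL : L = Matrix.diagonal d + Matrix.of (fun _ _ => (1:ℂ)) := by
    ext i j
    simp only [L, Pi0, d, Matrix.add_apply, Matrix.sub_apply, Matrix.of_apply,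
      Matrix.smul_apply, Matrix.diagonal, Matrix.one_apply]
    by_cases hij : i = j
    · subst hij
      by_cases hiℓ : (i : ℕ) < ℓ <;> simp [hiℓ, hβ, hα] <;> push_cast <;> ring
    · simp [hij]
  -- cardinalities
  have hcard1 : (Finset.univ.filter fun i : Fin N => (i:ℕ) < ℓ).card = ℓ := by
    have : (Finset.univ.filter fun i : Fin N => (i:ℕ) < ℓ)
        = Finset.univ.map (Fin.castLEEmb hℓN) := by
      ext i
      simp only [Finset.mem_filter, Finset.mem_univ, true_and, Finset.mem_map]
      constructor
      · intro h
        exact ⟨⟨(i : ℕ), h⟩, by ext; simp [Fin.castLEEmb]⟩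
      · rintro ⟨a, rfl⟩
        simpa [Fin.castLEEmb] using a.2
    rw [this, Finset.card_map, Finset.card_univ, Fintype.card_fin]
  have hcard2 : (Finset.univ.filter fun i : Fin N => ¬ (i:ℕ) < ℓ).card = m := by
    have := Finset.card_filter_add_card_filter_not (s := (Finset.univ : Finset (Fin N)))
      (p := fun i : Fin N => (i:ℕ) < ℓ)
    rw [Finset.card_univ, Fintype.card_fin, hcard1] at this
    omega
  -- product over any finset
  have hprod : ∀ s : Finset (Fin N),
      ∏ j ∈ s, d j = β ^ (s.filter fun j : Fin N => (j:ℕ) < ℓ).card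
        * α ^ (s.filter fun j : Fin N => ¬ (j:ℕ) < ℓ).card := by
    intro s
    rw [hd, Finset.prod_ite]
    simp [Finset.prod_const]
  rw [hL, det_diag_add_ones]
  have hP : ∏ i, d i = β ^ ℓ * α ^ m := by
    rw [hprod, hcard1, hcard2]
  have hsum : ∑ i, ∏ j ∈ Finset.univ.erase i, d j
      = ℓ * (β ^ (ℓ - 1) * α ^ m) + m * (β ^ ℓ * α ^ (m - 1)) := by
    rw [← Finset.sum_filter_add_sum_filter_not Finset.univ (fun i : Fin N => (i:ℕ) < ℓ)]
    have h1 : ∀ i ∈ Finset.univ.filter fun i : Fin N => (i:ℕ) < ℓ,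
        ∏ j ∈ Finset.univ.erase i, d j = β ^ (ℓ - 1) * α ^ m := by
      intro i hi
      rw [hprod]
      rw [Finset.filter_erase, Finset.filter_erase,
        Finset.card_erase_of_mem hi, hcard1,
        Finset.erase_eq_of_notMem (by simpa using (Finset.mem_filter.mp hi).2), hcard2]
    have h2 : ∀ i ∈ Finset.univ.filter fun i : Fin N => ¬ (i:ℕ) < ℓ,
        ∏ j ∈ Finset.univ.erase i, d j = β ^ ℓ * α ^ (m - 1) := by
      intro i hi
      rw [hprod]
      rw [Finset.filter_erase, Finset.filter_erase,
        Finset.card_erase_of_mem hi, hcard2,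
        Finset.erase_eq_of_notMem (by simpa using (Finset.mem_filter.mp hi).2), hcard1]
    rw [Finset.sum_congr rfl h1, Finset.sum_congr rfl h2, Finset.sum_const,
      Finset.sum_const, hcard1, hcard2, nsmul_eq_mul, nsmul_eq_mul]
  rw [hP, hsum]
  ring
end

section
/- With the notation of the complete graph generalized Laplacian L(θ) = J_N - (1+(N-1)cos θ) I_N + i sin θ Π (Π projecting onto the first ℓ coordinates, m = N - ℓ, α = -1-(N-1)cos θ, β = α + i sin θ): if βα(βα + ℓα + mβ) ≠ 0, then L(θ) is invertible and its inverse has entries (L(θ)⁻¹)_{ij} = [βα(βα+ℓα+mβ)]⁻¹ times: βα² + (ℓ-1)α² + mβα if 1 ≤ i = j ≤ ℓ; -α² if 1 ≤ i,j ≤ ℓ, i ≠ j; αβ² + (m-1)β² + ℓβα if ℓ < i = j ≤ N; -β² if ℓ < i,j ≤ N, i ≠ j; -βα otherwise. -/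
theorem complete_graph_generalized_laplacian_inverse
    (N ℓ : ℕ) (hN : 2 ≤ N) (hℓ1 : 1 ≤ ℓ) (hℓN : ℓ ≤ N) (m : ℕ) (hm : m = N - ℓ)
    (θ : ℝ) (α β : ℂ)
    (hα : α = -1 - ((N : ℂ) - 1) * Real.cos θ)
    (hβ : β = α + Real.sin θ * Complex.I)
    (hne : β * α * (β * α + ℓ * α + m * β) ≠ 0) :
    let Pi0 : Matrix (Fin N) (Fin N) ℂ :=
      Matrix.diagonal fun i => if (i : ℕ) < ℓ then 1 else 0
    let L : Matrix (Fin N) (Fin N) ℂ :=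
      (Matrix.of fun _ _ => (1 : ℂ))
        - (1 + ((N : ℂ) - 1) * Real.cos θ) • (1 : Matrix (Fin N) (Fin N) ℂ)
        + (Real.sin θ * Complex.I) • Pi0
    IsUnit L ∧
    L⁻¹ = Matrix.of (fun i j : Fin N =>
      (β * α * (β * α + ℓ * α + m * β))⁻¹ *
        (if (i : ℕ) < ℓ ∧ (j : ℕ) < ℓ then
          (if i = j then β * α ^ 2 + ((ℓ : ℂ) - 1) * α ^ 2 + m * β * α
           else -α ^ 2)
         else if ℓ ≤ (i : ℕ) ∧ ℓ ≤ (j : ℕ) then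
          (if i = j then α * β ^ 2 + ((m : ℂ) - 1) * β ^ 2 + ℓ * β * α
           else -β ^ 2)
         else -β * α)) := by
  intro Pi0 L
  set c : ℂ := β * α * (β * α + ℓ * α + m * β) with hc
  set A1 : ℂ := β * α ^ 2 + ((ℓ : ℂ) - 1) * α ^ 2 + (m : ℂ) * β * α with hA1
  set A2 : ℂ := α * β ^ 2 + ((m : ℂ) - 1) * β ^ 2 + (ℓ : ℂ) * β * α with hA2
  set g : Fin N → Fin N → ℂ := fun i j =>
      (if (i : ℕ) < ℓ ∧ (j : ℕ) < ℓ then (if i = j then A1 else -α ^ 2)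
       else if ℓ ≤ (i : ℕ) ∧ ℓ ≤ (j : ℕ) then (if i = j then A2 else -β ^ 2)
       else -β * α) with hg
  set M : Matrix (Fin N) (Fin N) ℂ := Matrix.of (fun i j => c⁻¹ * g i j) with hM
  -- entries of L
  have hLe : ∀ i k : Fin N, L i k
      = 1 + (if i = k then (if (i : ℕ) < ℓ then β else α) else 0) := by
    intro i k
    by_cases hik : i = k
    · subst hik
      by_cases hiℓ : (i : ℕ) < ℓ <;>
        simp [L, Pi0, Matrix.add_apply, Matrix.sub_apply, Matrix.smul_apply,
          Matrix.one_apply, Matrix.diagonal_apply, hiℓ, hα, hβ] <;> ring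
    · simp [L, Pi0, Matrix.add_apply, Matrix.sub_apply, Matrix.smul_apply,
        Matrix.one_apply, Matrix.diagonal_apply, hik]
  -- counting sums
  have hcount : ∀ b d : ℂ, (∑ k : Fin N, if (k : ℕ) < ℓ then b else d)
      = (ℓ : ℂ) * b + (m : ℂ) * d := by
    intro b d
    rw [Fin.sum_univ_eq_sum_range (fun k => if k < ℓ then b else d)]
    rw [Finset.sum_ite, Finset.sum_const, Finset.sum_const]
    have h1 : (Finset.range N).filter (fun k => k < ℓ) = Finset.range ℓ := by
      ext x; simp; omega
    have h2 : ((Finset.range N).filter (fun k => ¬ k < ℓ)).card = m := by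
      have : (Finset.range N).filter (fun k => ¬ k < ℓ) = Finset.Ico ℓ N := by
        ext x; simp; omega
      rw [this, Nat.card_Ico]; omega
    rw [h1, h2, Finset.card_range]
    simp [nsmul_eq_mul]
  -- column sums of g
  have hcol : ∀ j : Fin N, (∑ k : Fin N, g k j)
      = (if (j : ℕ) < ℓ then β * α ^ 2 else α * β ^ 2) := by
    intro j
    by_cases hjℓ : (j : ℕ) < ℓ
    · have hrw : ∀ k : Fin N, g k j
          = (if k = j then A1 + α ^ 2 else 0)
            + (if (k : ℕ) < ℓ then -α ^ 2 else -β * α) := by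
        intro k
        by_cases hkj : k = j
        · subst hkj; simp [hg, hjℓ]; try ring
        · by_cases hkℓ : (k : ℕ) < ℓ
          · simp [hg, hkj, hkℓ, hjℓ]
          · have : ¬ ℓ ≤ (j : ℕ) := by omega
            simp [hg, hkj, hkℓ, this]
      rw [Finset.sum_congr rfl (fun k _ => hrw k), Finset.sum_add_distrib,
        Finset.sum_ite_eq' Finset.univ j, hcount]
      simp [hjℓ, hA1]; ring
    · have hrw : ∀ k : Fin N, g k j
          = (if k = j then A2 + β ^ 2 else 0)
            + (if (k : ℕ) < ℓ then -β * α else -β ^ 2) := by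
        intro k
        by_cases hkj : k = j
        · subst hkj
          have h1 : ¬ ((k : ℕ) < ℓ ∧ (k : ℕ) < ℓ) := by omega
          have h2 : ℓ ≤ (k : ℕ) ∧ ℓ ≤ (k : ℕ) := by omega
          simp [hg, hjℓ, h1, h2]; try ring
        · by_cases hkℓ : (k : ℕ) < ℓ
          · have h1 : ¬ ((k : ℕ) < ℓ ∧ (j : ℕ) < ℓ) := by omega
            have h2 : ¬ (ℓ ≤ (k : ℕ) ∧ ℓ ≤ (j : ℕ)) := by omega
            simp [hg, hjℓ, hkj, hkℓ, h1, h2]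
          · have h1 : ¬ ((k : ℕ) < ℓ ∧ (j : ℕ) < ℓ) := by omega
            have h2 : ℓ ≤ (k : ℕ) ∧ ℓ ≤ (j : ℕ) := by omega
            simp [hg, hjℓ, hkj, hkℓ, h1, h2]
      rw [Finset.sum_congr rfl (fun k _ => hrw k), Finset.sum_add_distrib,
        Finset.sum_ite_eq' Finset.univ j, hcount]
      simp [hjℓ, hA2]; ring
  -- main multiplication
  have hLM : L * M = 1 := by
    ext i j
    rw [Matrix.mul_apply]
    have hterm : ∀ k : Fin N, L i k * M k j
        = c⁻¹ * g k j + (if i = k then (if (i : ℕ) < ℓ then β else α) * (c⁻¹ * g k j) else 0) := by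
      intro k
      rw [hLe i k]
      by_cases hik : i = k
      · subst hik
        by_cases hiℓ : (i : ℕ) < ℓ <;> simp [hM, hiℓ] <;> try ring
      · simp [hM, hik]
        try ring
    rw [Finset.sum_congr rfl (fun k _ => hterm k), Finset.sum_add_distrib,
      Finset.sum_ite_eq Finset.univ i, ← Finset.mul_sum, hcol j]
    simp only [Finset.mem_univ, if_true]
    have hii : i = i := rfl
    by_cases hij : i = j
    · subst hij
      by_cases hiℓ : (i : ℕ) < ℓ
      · have h1 : (i : ℕ) < ℓ ∧ (i : ℕ) < ℓ := ⟨hiℓ, hiℓ⟩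
        simp [hg, hiℓ, h1, Matrix.one_apply]
        field_simp
        rw [hc, hA1]; ring
      · have h1 : ¬ ((i : ℕ) < ℓ ∧ (i : ℕ) < ℓ) := by omega
        have h2 : ℓ ≤ (i : ℕ) ∧ ℓ ≤ (i : ℕ) := by omega
        simp [hg, hiℓ, h1, h2, Matrix.one_apply]
        field_simp
        rw [hc, hA2]; ring
    · have hone : (1 : Matrix (Fin N) (Fin N) ℂ) i j = 0 := by
        simp [Matrix.one_apply, hij]
      rw [hone]
      by_cases hiℓ : (i : ℕ) < ℓ <;> by_cases hjℓ : (j : ℕ) < ℓ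
      · have h1 : (i : ℕ) < ℓ ∧ (j : ℕ) < ℓ := ⟨hiℓ, hjℓ⟩
        simp [hg, hiℓ, hjℓ, h1, hij]
        try field_simp
        try ring
      · have h1 : ¬ ((i : ℕ) < ℓ ∧ (j : ℕ) < ℓ) := by omega
        have h2 : ¬ (ℓ ≤ (i : ℕ) ∧ ℓ ≤ (j : ℕ)) := by omega
        simp [hg, hiℓ, hjℓ, h1, h2, hij]
        try field_simp
        try ring
      · have h1 : ¬ ((i : ℕ) < ℓ ∧ (j : ℕ) < ℓ) := by omega
        have h2 : ¬ (ℓ ≤ (i : ℕ) ∧ ℓ ≤ (j : ℕ)) := by omega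
        simp [hg, hiℓ, hjℓ, h1, h2, hij]
        try field_simp
        try ring
      · have h1 : ¬ ((i : ℕ) < ℓ ∧ (j : ℕ) < ℓ) := by omega
        have h2 : ℓ ≤ (i : ℕ) ∧ ℓ ≤ (j : ℕ) := by omega
        simp [hg, hiℓ, hjℓ, h1, h2, hij]
        try field_simp
        try ring
  exact ⟨(Matrix.isUnit_iff_isUnit_det L).mpr (Matrix.isUnit_det_of_right_inverse hLM), Matrix.inv_eq_right_inv hLM⟩
end

section
/- Let G₀ be a κ-regular finite connected graph (κ ≥ 2) with adjacency matrix M₀, and let μ be a real eigenvalue of M₀ with |μ| ≤ κ. Define z± = (μ ± sqrt(μ² - (κ²-1)))/(κ+1). If μ² ≥ κ² - 1, then z± are real and (κ-1)/(κ+1) ≤ |z±| < 1 when μ ≠ ±κ (and |z_+| = 1 if μ = ±κ); if μ² < κ² - 1, then |z±|² = (κ-1)/(κ+1). -/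
theorem truncated_grover_eigenvalue_location
    {V : Type*} [Fintype V] [DecidableEq V]
    (G : SimpleGraph V) [DecidableRel G.Adj] (hG : G.Connected)
    (κ : ℕ) (hκ : 2 ≤ κ) (hreg : G.IsRegularOfDegree κ)
    (μ : ℝ)
    (hμ : ∃ v : V → ℝ, v ≠ 0 ∧ (G.adjMatrix ℝ).mulVec v = μ • v)
    (hμκ : |μ| ≤ (κ : ℝ)) :
    (μ ^ 2 ≥ (κ : ℝ) ^ 2 - 1 →
      let zp : ℝ := (μ + Real.sqrt (μ ^ 2 - ((κ : ℝ) ^ 2 - 1))) / ((κ : ℝ) + 1)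
      let zm : ℝ := (μ - Real.sqrt (μ ^ 2 - ((κ : ℝ) ^ 2 - 1))) / ((κ : ℝ) + 1)
      ((μ ≠ (κ : ℝ) ∧ μ ≠ -(κ : ℝ)) →
        (((κ : ℝ) - 1) / ((κ : ℝ) + 1) ≤ |zp| ∧ |zp| < 1 ∧
         ((κ : ℝ) - 1) / ((κ : ℝ) + 1) ≤ |zm| ∧ |zm| < 1)) ∧
      ((μ = (κ : ℝ) ∨ μ = -(κ : ℝ)) → |zp| = 1 ∨ |zm| = 1)) ∧
    (μ ^ 2 < (κ : ℝ) ^ 2 - 1 →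
      let zp : ℂ := ((μ : ℂ) + Real.sqrt ((κ : ℝ) ^ 2 - 1 - μ ^ 2) * Complex.I) /
        ((κ : ℂ) + 1)
      let zm : ℂ := ((μ : ℂ) - Real.sqrt ((κ : ℝ) ^ 2 - 1 - μ ^ 2) * Complex.I) /
        ((κ : ℂ) + 1)
      Complex.normSq zp = ((κ : ℝ) - 1) / ((κ : ℝ) + 1) ∧
      Complex.normSq zm = ((κ : ℝ) - 1) / ((κ : ℝ) + 1)) := by
  have hκ2 : (2 : ℝ) ≤ (κ : ℝ) := by exact_mod_cast hκ
  have hκ1 : (0 : ℝ) < (κ : ℝ) + 1 := by linarith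
  constructor
  · intro hge
    intro zp zm
    have hs0 : Real.sqrt (μ ^ 2 - ((κ : ℝ) ^ 2 - 1)) ^ 2 = μ ^ 2 - ((κ : ℝ) ^ 2 - 1) :=
      Real.sq_sqrt (by linarith)
    set s := Real.sqrt (μ ^ 2 - ((κ : ℝ) ^ 2 - 1)) with hs
    have hsnn : 0 ≤ s := Real.sqrt_nonneg _
    have hpnn : (0 : ℝ) ≤ ((κ : ℝ) - 1) / ((κ : ℝ) + 1) := div_nonneg (by linarith) (by linarith)
    have hprod : zp * zm = ((κ : ℝ) - 1) / ((κ : ℝ) + 1) := by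
      show ((μ + s) / ((κ : ℝ) + 1)) * ((μ - s) / ((κ : ℝ) + 1)) = _
      rw [div_mul_div_comm, div_eq_div_iff (by positivity) (by positivity)]
      nlinarith [hs0]
    constructor
    · rintro ⟨h1, h2⟩
      have habs : |μ| < (κ : ℝ) := lt_of_le_of_ne hμκ (by
        intro h
        rcases (abs_eq (by linarith : (0:ℝ) ≤ (κ : ℝ))).1 h with h | h
        · exact h1 h
        · exact h2 h)
      have hμ2 : μ ^ 2 < (κ : ℝ) ^ 2 := by nlinarith [abs_nonneg μ, sq_abs μ]
      have hslt : s < 1 := by nlinarith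
      have habsμ : |μ| + s < (κ : ℝ) + 1 := by linarith
      have hzp1 : |zp| < 1 := by
        show |(μ + s) / ((κ : ℝ) + 1)| < 1
        rw [abs_div, abs_of_pos hκ1, div_lt_one hκ1]
        calc |μ + s| ≤ |μ| + |s| := abs_add_le _ _
          _ = |μ| + s := by rw [abs_of_nonneg hsnn]
          _ < (κ : ℝ) + 1 := habsμ
      have hzm1 : |zm| < 1 := by
        show |(μ - s) / ((κ : ℝ) + 1)| < 1
        rw [abs_div, abs_of_pos hκ1, div_lt_one hκ1]
        calc |μ - s| ≤ |μ| + |s| := abs_sub _ _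
          _ = |μ| + s := by rw [abs_of_nonneg hsnn]
          _ < (κ : ℝ) + 1 := habsμ
      have hprodabs : |zp| * |zm| = ((κ : ℝ) - 1) / ((κ : ℝ) + 1) := by
        rw [← abs_mul, hprod, abs_of_nonneg hpnn]
      refine ⟨?_, hzp1, ?_, hzm1⟩
      · calc ((κ : ℝ) - 1) / ((κ : ℝ) + 1) = |zp| * |zm| := hprodabs.symm
          _ ≤ |zp| * 1 := by
            exact mul_le_mul_of_nonneg_left (le_of_lt hzm1) (abs_nonneg _)
          _ = |zp| := mul_one _
      · calc ((κ : ℝ) - 1) / ((κ : ℝ) + 1) = |zm| * |zp| := by rw [mul_comm]; exact hprodabs.symm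
          _ ≤ |zm| * 1 := by
            exact mul_le_mul_of_nonneg_left (le_of_lt hzp1) (abs_nonneg _)
          _ = |zm| := mul_one _
    · rintro (h | h)
      · left
        have hs1 : s = 1 := by
          rw [hs, h]
          rw [show (κ : ℝ) ^ 2 - ((κ : ℝ) ^ 2 - 1) = 1 by ring]
          exact Real.sqrt_one
        show |(μ + s) / ((κ : ℝ) + 1)| = 1
        rw [h, hs1, div_self (ne_of_gt hκ1), abs_one]
      · right
        have hs1 : s = 1 := by
          rw [hs, h]
          rw [show (-(κ : ℝ)) ^ 2 - ((κ : ℝ) ^ 2 - 1) = 1 by ring]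
          exact Real.sqrt_one
        show |(μ - s) / ((κ : ℝ) + 1)| = 1
        rw [h, hs1, show (-(κ : ℝ) - 1) / ((κ : ℝ) + 1) = -1 by rw [div_eq_iff (ne_of_gt hκ1)]; ring, abs_neg, abs_one]
  · intro hlt
    intro zp zm
    have ht0 : Real.sqrt ((κ : ℝ) ^ 2 - 1 - μ ^ 2) ^ 2 = (κ : ℝ) ^ 2 - 1 - μ ^ 2 :=
      Real.sq_sqrt (by linarith)
    set t := Real.sqrt ((κ : ℝ) ^ 2 - 1 - μ ^ 2) with hts
    have hden : Complex.normSq ((κ : ℂ) + 1) = ((κ : ℝ) + 1) ^ 2 := by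
      rw [show ((κ : ℂ) + 1) = (((κ : ℝ) + 1 : ℝ) : ℂ) by push_cast; ring,
        Complex.normSq_ofReal]
      ring
    have hnum₁ : Complex.normSq ((μ : ℂ) + (t : ℂ) * Complex.I) = μ ^ 2 + t ^ 2 :=
      Complex.normSq_add_mul_I μ t
    have hnum₂ : Complex.normSq ((μ : ℂ) - (t : ℂ) * Complex.I) = μ ^ 2 + t ^ 2 := by
      rw [show ((μ : ℂ) - (t : ℂ) * Complex.I) = (μ : ℂ) + ((-t : ℝ) : ℂ) * Complex.I by
        push_cast; ring, Complex.normSq_add_mul_I]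
      ring
    have key : (μ ^ 2 + t ^ 2) / ((κ : ℝ) + 1) ^ 2 = ((κ : ℝ) - 1) / ((κ : ℝ) + 1) := by
      rw [div_eq_div_iff (by positivity) (by positivity)]
      nlinarith [ht0]
    constructor
    · show Complex.normSq (((μ : ℂ) + (t : ℂ) * Complex.I) / ((κ : ℂ) + 1)) = _
      rw [map_div₀, hnum₁, hden, key]
    · show Complex.normSq (((μ : ℂ) - (t : ℂ) * Complex.I) / ((κ : ℂ) + 1)) = _
      rw [map_div₀, hnum₂, hden, key]
end

section
/- For integers N ≥ 3 and m with 1 ≤ m ≤ N-1, the sequence m ↦ (m+1)/m · (N-1) is strictly decreasing in m, and for all such m, (m+1)/m · (N-1) > (N-1)³(N²-N+1)/(N(N³-2N²+2N-2)). -/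
theorem comfortability_at_theta_star_monotone (N : ℕ) (hN : 3 ≤ N) :
    (∀ m₁ m₂ : ℕ, 1 ≤ m₁ → m₁ < m₂ → m₂ ≤ N - 1 →
      ((m₂ : ℝ) + 1) / m₂ * ((N : ℝ) - 1) < ((m₁ : ℝ) + 1) / m₁ * ((N : ℝ) - 1)) ∧
    (∀ m : ℕ, 1 ≤ m → m ≤ N - 1 →
      ((N : ℝ) - 1) ^ 3 * ((N : ℝ) ^ 2 - N + 1) /
          ((N : ℝ) * ((N : ℝ) ^ 3 - 2 * N ^ 2 + 2 * N - 2))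
        < ((m : ℝ) + 1) / m * ((N : ℝ) - 1)) := by
  have hN3 : (3 : ℝ) ≤ (N : ℝ) := by exact_mod_cast hN
  have hN1 : (0 : ℝ) < (N : ℝ) - 1 := by linarith
  constructor
  · intro m₁ m₂ h1 h12 h2
    have hm1 : (0 : ℝ) < (m₁ : ℝ) := by exact_mod_cast h1
    have hm2 : (0 : ℝ) < (m₂ : ℝ) := by
      have h : 0 < m₂ := by omega
      exact_mod_cast h
    have h12' : (m₁ : ℝ) < (m₂ : ℝ) := by exact_mod_cast h12
    have : ((m₂ : ℝ) + 1) / m₂ < ((m₁ : ℝ) + 1) / m₁ := by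
      rw [div_lt_div_iff₀ hm2 hm1]
      nlinarith
    exact mul_lt_mul_of_pos_right this hN1
  · intro m h1 h2
    have hm1 : (0 : ℝ) < (m : ℝ) := by exact_mod_cast h1
    have h2' : (m : ℝ) ≤ (N : ℝ) - 1 := by
      have : (m : ℝ) ≤ ((N - 1 : ℕ) : ℝ) := by exact_mod_cast h2
      have hc : ((N - 1 : ℕ) : ℝ) = (N : ℝ) - 1 := by
        have : 1 ≤ N := by omega
        push_cast [this]; ring
      linarith [hc ▸ this]
    have hden : (0 : ℝ) < (N : ℝ) * ((N : ℝ) ^ 3 - 2 * N ^ 2 + 2 * N - 2) := by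
      nlinarith [sq_nonneg ((N:ℝ) - 2), mul_pos hN1 hN1, sq_nonneg ((N:ℝ)-1)]
    have hN' : ((N : ℝ) - 1) ^ 3 * ((N : ℝ) ^ 2 - N + 1) /
        ((N : ℝ) * ((N : ℝ) ^ 3 - 2 * N ^ 2 + 2 * N - 2)) < (N : ℝ) := by
      rw [div_lt_iff₀ hden]
      nlinarith
    have hmain : (N : ℝ) ≤ ((m : ℝ) + 1) / m * ((N : ℝ) - 1) := by
      rw [← sub_nonneg]
      have hnum : (0:ℝ) ≤ ((m : ℝ) + 1) * ((N : ℝ) - 1) - (N : ℝ) * m := by nlinarith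
      calc (0:ℝ) ≤ (((m : ℝ) + 1) * ((N : ℝ) - 1) - (N : ℝ) * m) / m := div_nonneg hnum hm1.le
        _ = ((m : ℝ) + 1) / m * ((N : ℝ) - 1) - (N : ℝ) := by field_simp
    linarith
end

section
/- For every integer N ≥ 3 and every integer ℓ with 1 ≤ ℓ ≤ N, the quantity E(0,ℓ) := N(N-1)/(2ℓ²) + (ℓ-1)/(ℓN) is strictly decreasing in ℓ. -/
theorem comfortability_at_zero_strictly_decreasing (N : ℕ) (hN : 3 ≤ N) :
    ∀ ℓ₁ ℓ₂ : ℕ, 1 ≤ ℓ₁ → ℓ₁ < ℓ₂ → ℓ₂ ≤ N →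
      (N : ℝ) * ((N : ℝ) - 1) / (2 * (ℓ₂ : ℝ) ^ 2) + ((ℓ₂ : ℝ) - 1) / ((ℓ₂ : ℝ) * N)
        < (N : ℝ) * ((N : ℝ) - 1) / (2 * (ℓ₁ : ℝ) ^ 2) + ((ℓ₁ : ℝ) - 1) / ((ℓ₁ : ℝ) * N) := by
  intro l1 l2 h1 h12 h2N
  have hN' : (3 : ℝ) ≤ (N : ℝ) := by exact_mod_cast hN
  have h1' : (1 : ℝ) ≤ (l1 : ℝ) := by exact_mod_cast h1
  have h12' : (l1 : ℝ) < (l2 : ℝ) := by exact_mod_cast h12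
  have h2N' : (l2 : ℝ) ≤ (N : ℝ) := by exact_mod_cast h2N
  have hl1 : (0 : ℝ) < l1 := by linarith
  have hl2 : (0 : ℝ) < l2 := by linarith
  have hNpos : (0 : ℝ) < N := by linarith
  rw [div_add_div _ _ (by positivity) (by positivity),
      div_add_div _ _ (by positivity) (by positivity),
      div_lt_div_iff₀ (by positivity) (by positivity)]
  have h1N : (l1 : ℝ) ≤ N := by linarith
  have hkey : (0 : ℝ) < (N:ℝ)^2 * ((N:ℝ) - 1) * ((l1:ℝ) + l2) - 2 * ((l1:ℝ) * l2) := by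
    have hab : (l1:ℝ) * l2 ≤ (N:ℝ) * N := mul_le_mul h1N h2N' (le_of_lt hl2) (le_of_lt hNpos)
    have h6 : (3:ℝ) ≤ ((N:ℝ) - 1) * ((l1:ℝ) + l2) := by nlinarith
    have := mul_le_mul_of_nonneg_left h6 (sq_nonneg (N:ℝ))
    nlinarith [this, hab, sq_nonneg (N:ℝ)]
  have hcert : (0 : ℝ) < ((l2:ℝ) - l1) * ((l1:ℝ) * l2 *
      ((N:ℝ)^2 * ((N:ℝ) - 1) * ((l1:ℝ) + l2) - 2 * ((l1:ℝ) * l2))) :=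
    mul_pos (by linarith) (mul_pos (mul_pos hl1 hl2) hkey)
  nlinarith [hcert, mul_pos hNpos hNpos]
end
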